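/- arXiv:2102.09127 — 5 statements merged into one kernel-verified Lean document; each statement's English description precedes it below -/
import Mathlib

section
/- Consider the linear program: maximize (1/N)∑_{n=1}^N ∑_{k=1}^K Z_{n,k} a_k(x_n) over matrices Z ∈ [0,1]^{N×K}, subject to (1/N)∑_{n=1}^N ∑_{k=1}^K Z_{n,k} c_k ≤ b and ∑_{k=1}^K Z_{n,k} = 1 for every n, where the costs c_k ≥ 0 satisfy c_{base} = 0 for some index base, and the accuracy values a_k(x_n) ∈ [0,1] are drawn i.i.d. from a continuous distribution. Then with probability 1, the optimal solution Z* of this LP satisfies ‖Z*_{n,·}‖₀ = 1 (i.e., the n-th row has exactly one nonzero entry) for all n except at most one index. -/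
open MeasureTheory

private lemma sum_two_mul {ι : Type*} [Fintype ι] [DecidableEq ι] {i j : ι} (h : i ≠ j)
    (s t : ℝ) (f : ι → ℝ) :
    ∑ x, (if x = i then s else if x = j then t else 0) * f x = s * f i + t * f j := by
  have key : ∀ x, (if x = i then s else if x = j then t else 0) * f x
      = (if x = i then s * f i else 0) + (if x = j then t * f j else 0) := by
    intro x
    by_cases h1 : x = i <;> by_cases h2 : x = j <;> simp_all
  simp only [key, Finset.sum_add_distrib, Finset.sum_ite_eq', Finset.mem_univ, if_true]

private lemma sum_two {ι : Type*} [Fintype ι] [DecidableEq ι] {i j : ι} (h : i ≠ j)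
    (s t : ℝ) :
    ∑ x, (if x = i then s else if x = j then t else 0) = s + t := by
  have := sum_two_mul h s t (fun _ => (1:ℝ))
  simpa using this

private noncomputable def ev {N K : ℕ} (n : Fin N) (k : Fin K) : (Fin N → Fin K → ℝ) →ₗ[ℝ] ℝ :=
  LinearMap.comp (LinearMap.proj k : (Fin K → ℝ) →ₗ[ℝ] ℝ)
    (LinearMap.proj n : (Fin N → Fin K → ℝ) →ₗ[ℝ] (Fin K → ℝ))

@[simp] private lemma ev_apply {N K : ℕ} (n : Fin N) (k : Fin K) (a : Fin N → Fin K → ℝ) :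
    ev n k a = a n k := rfl

private lemma ker_null {N K : ℕ} (L : (Fin N → Fin K → ℝ) →ₗ[ℝ] ℝ) (hL : L ≠ 0) :
    volume {a : Fin N → Fin K → ℝ | L a = 0} = 0 := by
  have h : LinearMap.ker L ≠ ⊤ := fun h => hL (LinearMap.ker_eq_top.mp h)
  have h2 := Measure.addHaar_submodule (volume : Measure (Fin N → Fin K → ℝ)) (LinearMap.ker L) h
  have he : {a : Fin N → Fin K → ℝ | L a = 0} = (LinearMap.ker L : Set (Fin N → Fin K → ℝ)) := by
    ext x; simp [LinearMap.mem_ker]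
  rw [he]; exact h2

private lemma main_det {N K : ℕ} (hN : 0 < N) (c : Fin K → ℝ) (b : ℝ)
    (a : Fin N → Fin K → ℝ)
    (G1 : ∀ (n : Fin N) (k k' : Fin K), k ≠ k' → a n k ≠ a n k')
    (G2 : ∀ (n₁ n₂ : Fin N) (k₁ k₁' k₂ k₂' : Fin K), n₁ ≠ n₂ → k₁ ≠ k₁' → k₂ ≠ k₂' →
      c k₁ ≠ c k₁' → c k₂ ≠ c k₂' →
      (c k₂ - c k₂') * (a n₁ k₁ - a n₁ k₁') ≠ (c k₁ - c k₁') * (a n₂ k₂ - a n₂ k₂'))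
    (Z : Fin N → Fin K → ℝ)
    (hZ01 : ∀ n k, Z n k ∈ Set.Icc (0:ℝ) 1)
    (hZb : (1 / N : ℝ) * ∑ n, ∑ k, Z n k * c k ≤ b)
    (hZsum : ∀ n, ∑ k, Z n k = 1)
    (hopt : ∀ W : Fin N → Fin K → ℝ,
      (∀ n k, W n k ∈ Set.Icc (0:ℝ) 1) →
      (1 / N : ℝ) * ∑ n, ∑ k, W n k * c k ≤ b →
      (∀ n, ∑ k, W n k = 1) →
      (1 / N : ℝ) * ∑ n, ∑ k, W n k * a n k ≤
        (1 / N : ℝ) * ∑ n, ∑ k, Z n k * a n k) :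
    (((Finset.univ : Finset (Fin N)).filter fun n =>
        (((Finset.univ : Finset (Fin K)).filter fun k => Z n k ≠ 0)).card ≠ 1)).card ≤ 1 := by
  by_contra hcon
  push_neg at hcon
  obtain ⟨n₁, hn₁, n₂, hn₂, hne12⟩ := Finset.one_lt_card.mp hcon
  simp only [Finset.mem_filter, Finset.mem_univ, true_and] at hn₁ hn₂
  -- row extraction
  have hrow : ∀ n : Fin N, ((Finset.univ.filter fun k => Z n k ≠ 0)).card ≠ 1 →
      ∃ k k' : Fin K, k ≠ k' ∧ 0 < Z n k ∧ 0 < Z n k' ∧ Z n k + Z n k' ≤ 1 := by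
    intro n hn
    have hsum := hZsum n
    have hnonempty : (Finset.univ.filter fun k => Z n k ≠ 0).Nonempty := by
      rcases Finset.eq_empty_or_nonempty (Finset.univ.filter fun k => Z n k ≠ 0) with he | h
      · exfalso
        have hz : ∑ k, Z n k = 0 := by
          apply Finset.sum_eq_zero
          intro k _
          by_contra hk
          have hmem : k ∈ Finset.univ.filter fun k => Z n k ≠ 0 := by simp [hk]
          rw [he] at hmem
          exact absurd hmem (Finset.notMem_empty k)
        rw [hsum] at hz
        exact one_ne_zero hz
      · exact h
    have hone : 1 < (Finset.univ.filter fun k => Z n k ≠ 0).card :=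
      lt_of_le_of_ne (Finset.one_le_card.mpr hnonempty) (Ne.symm hn)
    obtain ⟨k, hk, k', hk', hkk'⟩ := Finset.one_lt_card.mp hone
    simp only [Finset.mem_filter, Finset.mem_univ, true_and] at hk hk'
    refine ⟨k, k', hkk', lt_of_le_of_ne (hZ01 n k).1 (Ne.symm hk),
      lt_of_le_of_ne (hZ01 n k').1 (Ne.symm hk'), ?_⟩
    calc Z n k + Z n k' = ∑ x ∈ ({k, k'} : Finset (Fin K)), Z n x := (Finset.sum_pair hkk').symm
      _ ≤ ∑ x, Z n x := Finset.sum_le_sum_of_subset_of_nonneg (Finset.subset_univ _)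
          (fun i _ _ => (hZ01 n i).1)
      _ = 1 := hsum
  obtain ⟨k₁, k₁', hk1, hZ11, hZ12, hsum1⟩ := hrow n₁ hn₁
  obtain ⟨k₂, k₂', hk2, hZ21, hZ22, hsum2⟩ := hrow n₂ hn₂
  -- choose perturbation coefficients
  obtain ⟨s, t, hst0, hstpos⟩ :
      ∃ s t : ℝ, s * (c k₁ - c k₁') + t * (c k₂ - c k₂') = 0 ∧
        0 < s * (a n₁ k₁ - a n₁ k₁') + t * (a n₂ k₂ - a n₂ k₂') := by
    by_cases h1 : c k₁ = c k₁'
    · refine ⟨a n₁ k₁ - a n₁ k₁', 0, by rw [h1]; ring, ?_⟩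
      have hd := sub_ne_zero_of_ne (G1 n₁ k₁ k₁' hk1)
      have := mul_self_pos.mpr hd
      nlinarith
    · by_cases h2 : c k₂ = c k₂'
      · refine ⟨0, a n₂ k₂ - a n₂ k₂', by rw [h2]; ring, ?_⟩
        have hd := sub_ne_zero_of_ne (G1 n₂ k₂ k₂' hk2)
        have := mul_self_pos.mpr hd
        nlinarith
      · have hG := G2 n₁ n₂ k₁ k₁' k₂ k₂' hne12 hk1 hk2 h1 h2
        have hu : (c k₂ - c k₂') * (a n₁ k₁ - a n₁ k₁')
            - (c k₁ - c k₁') * (a n₂ k₂ - a n₂ k₂') ≠ 0 := sub_ne_zero_of_ne hG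
        refine ⟨((c k₂ - c k₂') * (a n₁ k₁ - a n₁ k₁')
            - (c k₁ - c k₁') * (a n₂ k₂ - a n₂ k₂')) * (c k₂ - c k₂'),
          -(((c k₂ - c k₂') * (a n₁ k₁ - a n₁ k₁')
            - (c k₁ - c k₁') * (a n₂ k₂ - a n₂ k₂')) * (c k₁ - c k₁')), by ring, ?_⟩
        have hpos := mul_self_pos.mpr hu
        nlinarith
  -- margin
  set m : ℝ := min (min (Z n₁ k₁) (Z n₁ k₁')) (min (Z n₂ k₂) (Z n₂ k₂')) with hmdef
  have hm0 : 0 < m := lt_min (lt_min hZ11 hZ12) (lt_min hZ21 hZ22)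
  have hma : m ≤ Z n₁ k₁ := le_trans (min_le_left _ _) (min_le_left _ _)
  have hmc : m ≤ Z n₁ k₁' := le_trans (min_le_left _ _) (min_le_right _ _)
  have hme : m ≤ Z n₂ k₂ := le_trans (min_le_right _ _) (min_le_left _ _)
  have hmg : m ≤ Z n₂ k₂' := le_trans (min_le_right _ _) (min_le_right _ _)
  have hmb : m ≤ 1 - Z n₁ k₁ := by linarith
  have hmd : m ≤ 1 - Z n₁ k₁' := by linarith
  have hmf : m ≤ 1 - Z n₂ k₂ := by linarith
  have hmh : m ≤ 1 - Z n₂ k₂' := by linarith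
  clear hmdef
  set M : ℝ := max |s| |t| + 1 with hMdef
  have hM : 0 < M := by positivity
  set ε : ℝ := m / M with hεdef
  have hε : 0 < ε := div_pos hm0 hM
  have hεs : -m ≤ ε * s ∧ ε * s ≤ m := by
    have h1 : |s| ≤ M := le_trans (le_max_left _ _) (by linarith)
    have h2 : |ε * s| ≤ m := by
      rw [abs_mul, abs_of_pos hε]
      calc ε * |s| ≤ ε * M := mul_le_mul_of_nonneg_left h1 hε.le
        _ = m := by rw [hεdef]; field_simp
    exact abs_le.mp h2
  have hεt : -m ≤ ε * t ∧ ε * t ≤ m := by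
    have h1 : |t| ≤ M := le_trans (le_max_right _ _) (by linarith)
    have h2 : |ε * t| ≤ m := by
      rw [abs_mul, abs_of_pos hε]
      calc ε * |t| ≤ ε * M := mul_le_mul_of_nonneg_left h1 hε.le
        _ = m := by rw [hεdef]; field_simp
    exact abs_le.mp h2
  -- perturbation matrix
  set P : Fin N → Fin K → ℝ := fun n k =>
    if n = n₁ then (if k = k₁ then s else if k = k₁' then -s else 0)
    else if n = n₂ then (if k = k₂ then t else if k = k₂' then -t else 0) else 0 with hP
  set W : Fin N → Fin K → ℝ := fun n k => Z n k + ε * P n k with hW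
  have hPval : ∀ n k, P n k =
      if n = n₁ then (if k = k₁ then s else if k = k₁' then -s else 0)
      else if n = n₂ then (if k = k₂ then t else if k = k₂' then -t else 0) else 0 :=
    fun n k => rfl
  have hProw : ∀ n, ∑ k, P n k = 0 := by
    intro n
    by_cases h1 : n = n₁
    · have : ∀ k, P n k = (if k = k₁ then s else if k = k₁' then -s else 0) := by
        intro k; rw [hPval, if_pos h1]
      rw [Finset.sum_congr rfl fun k _ => this k, sum_two hk1 s (-s)]
      ring
    · by_cases h2 : n = n₂
      · have : ∀ k, P n k = (if k = k₂ then t else if k = k₂' then -t else 0) := by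
          intro k; rw [hPval, if_neg h1, if_pos h2]
        rw [Finset.sum_congr rfl fun k _ => this k, sum_two hk2 t (-t)]
        ring
      · have : ∀ k, P n k = 0 := by intro k; rw [hPval, if_neg h1, if_neg h2]
        rw [Finset.sum_congr rfl fun k _ => this k]
        simp
  have hPg : ∀ g : Fin N → Fin K → ℝ, ∑ n, ∑ k, P n k * g n k
      = s * (g n₁ k₁ - g n₁ k₁') + t * (g n₂ k₂ - g n₂ k₂') := by
    intro g
    have hinner : ∀ n, ∑ k, P n k * g n k =
        (if n = n₁ then s * g n₁ k₁ + (-s) * g n₁ k₁'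
          else if n = n₂ then t * g n₂ k₂ + (-t) * g n₂ k₂' else 0) := by
      intro n
      by_cases h1 : n = n₁
      · have hval : ∀ k, P n k = (if k = k₁ then s else if k = k₁' then -s else 0) := by
          intro k; rw [hPval, if_pos h1]
        rw [Finset.sum_congr rfl fun k _ => by rw [hval k], if_pos h1, h1]
        exact sum_two_mul hk1 s (-s) (g n₁)
      · by_cases h2 : n = n₂
        · have hval : ∀ k, P n k = (if k = k₂ then t else if k = k₂' then -t else 0) := by
            intro k; rw [hPval, if_neg h1, if_pos h2]
          rw [Finset.sum_congr rfl fun k _ => by rw [hval k], if_neg h1, if_pos h2, h2]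
          exact sum_two_mul hk2 t (-t) (g n₂)
        · have hval : ∀ k, P n k = 0 := by intro k; rw [hPval, if_neg h1, if_neg h2]
          rw [Finset.sum_congr rfl fun k _ => by rw [hval k], if_neg h1, if_neg h2]
          simp
    rw [Finset.sum_congr rfl fun n _ => hinner n, sum_two hne12]
    ring
  -- feasibility of W
  have hWval : ∀ n k, W n k = Z n k + ε * P n k := fun n k => rfl
  have hW01 : ∀ n k, W n k ∈ Set.Icc (0:ℝ) 1 := by
    intro n k
    rw [Set.mem_Icc, hWval, hPval]
    by_cases h1 : n = n₁
    · rw [if_pos h1]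
      by_cases hka : k = k₁
      · rw [if_pos hka, h1, hka]
        constructor <;> linarith [hεs.1, hεs.2]
      · rw [if_neg hka]
        by_cases hkb : k = k₁'
        · rw [if_pos hkb, h1, hkb, mul_neg]
          constructor <;> linarith [hεs.1, hεs.2]
        · rw [if_neg hkb, mul_zero, add_zero]
          exact ⟨(hZ01 n k).1, (hZ01 n k).2⟩
    · rw [if_neg h1]
      by_cases h2 : n = n₂
      · rw [if_pos h2]
        by_cases hka : k = k₂
        · rw [if_pos hka, h2, hka]
          constructor <;> linarith [hεt.1, hεt.2]
        · rw [if_neg hka]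
          by_cases hkb : k = k₂'
          · rw [if_pos hkb, h2, hkb, mul_neg]
            constructor <;> linarith [hεt.1, hεt.2]
          · rw [if_neg hkb, mul_zero, add_zero]
            exact ⟨(hZ01 n k).1, (hZ01 n k).2⟩
      · rw [if_neg h2, mul_zero, add_zero]
        exact ⟨(hZ01 n k).1, (hZ01 n k).2⟩
  have hWrow : ∀ n, ∑ k, W n k = 1 := by
    intro n
    rw [Finset.sum_congr rfl fun k _ => hWval n k, Finset.sum_add_distrib, hZsum n,
      ← Finset.mul_sum, hProw n]
    ring
  have hWexpand : ∀ g : Fin N → Fin K → ℝ,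
      ∑ n, ∑ k, W n k * g n k = (∑ n, ∑ k, Z n k * g n k) + ε * ∑ n, ∑ k, P n k * g n k := by
    intro g
    have h1 : ∀ n k, W n k * g n k = Z n k * g n k + ε * (P n k * g n k) := by
      intro n k; rw [hWval]; ring
    rw [Finset.sum_congr rfl fun n _ => Finset.sum_congr rfl fun k _ => h1 n k]
    rw [Finset.sum_congr rfl fun n _ => Finset.sum_add_distrib, Finset.sum_add_distrib]
    congr 1
    rw [Finset.mul_sum]
    exact Finset.sum_congr rfl fun n _ => (Finset.mul_sum _ _ _).symm
  have hWcost : (1 / N : ℝ) * ∑ n, ∑ k, W n k * c k ≤ b := by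
    have h := hWexpand (fun _ k => c k)
    have h2 := hPg (fun _ k => c k)
    rw [h, h2, hst0, mul_zero, add_zero]
    exact hZb
  have hle := hopt W hW01 hWcost hWrow
  have hWobj : ∑ n, ∑ k, W n k * a n k = (∑ n, ∑ k, Z n k * a n k)
      + ε * (s * (a n₁ k₁ - a n₁ k₁') + t * (a n₂ k₂ - a n₂ k₂')) := by
    rw [hWexpand a, hPg a]
  have hNpos : (0:ℝ) < 1 / N := by
    have hN' : (0:ℝ) < N := by exact_mod_cast hN
    positivity
  rw [hWobj] at hle
  nlinarith [mul_pos hε hstpos]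

/-- Sparsity of the LP relaxation of the API selection problem: almost surely over
the accuracy values, every optimal LP solution has exactly one nonzero entry in
every row except at most one. -/
theorem stmt_4 {N K : ℕ} (hN : 0 < N) (hK : 0 < K)
    (c : Fin K → ℝ) (base : Fin K) (b : ℝ)
    (hc : ∀ k, 0 ≤ c k) (hbase : c base = 0)
    (μ : Measure (Fin N → Fin K → ℝ)) [IsProbabilityMeasure μ]
    (hac : μ ≪ volume)
    (hsupp : ∀ᵐ a ∂μ, ∀ n k, a n k ∈ Set.Icc (0:ℝ) 1) :
    ∀ᵐ a ∂μ, ∀ Z : Fin N → Fin K → ℝ,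
      ((∀ n k, Z n k ∈ Set.Icc (0:ℝ) 1) ∧
        (1 / N : ℝ) * ∑ n, ∑ k, Z n k * c k ≤ b ∧
        (∀ n, ∑ k, Z n k = 1) ∧
        (∀ W : Fin N → Fin K → ℝ,
          (∀ n k, W n k ∈ Set.Icc (0:ℝ) 1) →
          (1 / N : ℝ) * ∑ n, ∑ k, W n k * c k ≤ b →
          (∀ n, ∑ k, W n k = 1) →
          (1 / N : ℝ) * ∑ n, ∑ k, W n k * a n k ≤
            (1 / N : ℝ) * ∑ n, ∑ k, Z n k * a n k)) →
      (((Finset.univ : Finset (Fin N)).filter fun n =>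
        (((Finset.univ : Finset (Fin K)).filter fun k => Z n k ≠ 0)).card ≠ 1)).card ≤ 1 := by
  have hG1 : ∀ᵐ a ∂μ, ∀ (n : Fin N) (k k' : Fin K), k ≠ k' → a n k ≠ a n k' := by
    rw [MeasureTheory.ae_all_iff]
    intro n
    rw [MeasureTheory.ae_all_iff]
    intro k
    rw [MeasureTheory.ae_all_iff]
    intro k'
    by_cases hkk : k = k'
    · exact Filter.Eventually.of_forall fun a h => absurd hkk h
    · have hnull : μ {x : Fin N → Fin K → ℝ | x n k = x n k'} = 0 := by
        apply hac
        have hset : {x : Fin N → Fin K → ℝ | x n k = x n k'}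
            = {x : Fin N → Fin K → ℝ | (ev n k - ev n k') x = 0} := by
          ext x
          simp [sub_eq_zero]
        rw [hset]
        apply ker_null
        intro hL
        have hw := congrArg
          (fun L : (Fin N → Fin K → ℝ) →ₗ[ℝ] ℝ =>
            L (fun (_ : Fin N) (k'' : Fin K) => if k'' = k then (1:ℝ) else 0)) hL
        simp [Ne.symm hkk] at hw
      rw [ae_iff]
      apply measure_mono_null _ hnull
      intro x hx
      simp only [Set.mem_setOf_eq] at hx ⊢
      push_neg at hx
      exact hx.2
  have hG2 : ∀ᵐ a ∂μ, ∀ (n₁ n₂ : Fin N) (k₁ k₁' k₂ k₂' : Fin K), n₁ ≠ n₂ → k₁ ≠ k₁' → k₂ ≠ k₂' →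
      c k₁ ≠ c k₁' → c k₂ ≠ c k₂' →
      (c k₂ - c k₂') * (a n₁ k₁ - a n₁ k₁') ≠ (c k₁ - c k₁') * (a n₂ k₂ - a n₂ k₂') := by
    rw [MeasureTheory.ae_all_iff]; intro n₁
    rw [MeasureTheory.ae_all_iff]; intro n₂
    rw [MeasureTheory.ae_all_iff]; intro k₁
    rw [MeasureTheory.ae_all_iff]; intro k₁'
    rw [MeasureTheory.ae_all_iff]; intro k₂
    rw [MeasureTheory.ae_all_iff]; intro k₂'
    by_cases hn : n₁ ≠ n₂
    swap
    · exact Filter.Eventually.of_forall fun a h => absurd h hn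
    by_cases hk1 : k₁ ≠ k₁'
    swap
    · exact Filter.Eventually.of_forall fun a _ h => absurd h hk1
    by_cases hc2 : c k₂ ≠ c k₂'
    swap
    · exact Filter.Eventually.of_forall fun a _ _ _ _ h => absurd h hc2
    have hnull : μ {x : Fin N → Fin K → ℝ |
        (c k₂ - c k₂') * (x n₁ k₁ - x n₁ k₁') = (c k₁ - c k₁') * (x n₂ k₂ - x n₂ k₂')} = 0 := by
      apply hac
      have hset : {x : Fin N → Fin K → ℝ |
          (c k₂ - c k₂') * (x n₁ k₁ - x n₁ k₁') = (c k₁ - c k₁') * (x n₂ k₂ - x n₂ k₂')}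
          = {x : Fin N → Fin K → ℝ |
            ((c k₂ - c k₂') • (ev n₁ k₁ - ev n₁ k₁')
              - (c k₁ - c k₁') • (ev n₂ k₂ - ev n₂ k₂')) x = 0} := by
        ext x
        simp [sub_eq_zero, smul_eq_mul]
      rw [hset]
      apply ker_null
      intro hL
      have hw := congrArg
        (fun L : (Fin N → Fin K → ℝ) →ₗ[ℝ] ℝ =>
          L (fun (n : Fin N) (k : Fin K) => if n = n₁ ∧ k = k₁ then (1:ℝ) else 0)) hL
      simp only [LinearMap.sub_apply, LinearMap.smul_apply, ev_apply, LinearMap.zero_apply,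
        smul_eq_mul, Ne.symm hk1, Ne.symm hn] at hw
      norm_num at hw
      exact hc2 (by linarith)
    rw [ae_iff]
    apply measure_mono_null _ hnull
    intro x hx
    simp only [Set.mem_setOf_eq] at hx ⊢
    push_neg at hx
    exact hx.2.2.2.2.2
  filter_upwards [hG1, hG2] with a h1 h2
  rintro Z ⟨hZ01, hZb, hZsum, hopt⟩
  exact main_det hN c b a h1 h2 Z hZ01 hZb hZsum hopt
end

section
/- With the setup of the API selection ILP (Z ∈ {0,1}^{N×K}, rows sum to 1, average cost ≤ b, costs c_k ≥ 0 with c_{base} = 0, accuracies a_k(x_n) ∈ [0,1] drawn from a continuous distribution), the rounded LP solution Z' (which agrees with the LP optimum on rows with a single nonzero entry and assigns the zero-cost base service on the remaining at most one row) achieves, with probability 1, average accuracy (1/N)∑_n ∑_k Z'_{n,k} a_k(x_n) ≥ (1/N)∑_n ∑_k Z*_{n,k} a_k(x_n) − 1/N, where Z* is an optimal solution of the ILP, while satisfying all ILP constraints. -/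
open MeasureTheory

/-- perturbation direction matrix -/
def Pmat {N K : ℕ} (n1 n2 : Fin N) (k1 k1' k2 k2' : Fin K) (u v : ℝ) :
    Fin N → Fin K → ℝ := fun n k =>
  (if n = n1 then (if k = k1 then u else 0) - (if k = k1' then u else 0) else 0)
  + (if n = n2 then (if k = k2 then v else 0) - (if k = k2' then v else 0) else 0)

lemma Prow {N K : ℕ} (n1 n2 : Fin N) (k1 k1' k2 k2' : Fin K) (u v : ℝ) (n : Fin N) :
    ∑ k, Pmat n1 n2 k1 k1' k2 k2' u v n k = 0 := by
  unfold Pmat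
  by_cases h1 : n = n1 <;> by_cases h2 : n = n2 <;>
    simp [h1, h2, Finset.sum_add_distrib, Finset.sum_sub_distrib, Finset.sum_ite_eq']

lemma Psum {N K : ℕ} (n1 n2 : Fin N) (k1 k1' k2 k2' : Fin K) (hn : n1 ≠ n2)
    (u v : ℝ) (g : Fin N → Fin K → ℝ) :
    ∑ n, ∑ k, Pmat n1 n2 k1 k1' k2 k2' u v n k * g n k
      = u * (g n1 k1 - g n1 k1') + v * (g n2 k2 - g n2 k2') := by
  have h : ∀ n, ∑ k, Pmat n1 n2 k1 k1' k2 k2' u v n k * g n k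
      = (if n = n1 then u * (g n k1 - g n k1') else 0)
        + (if n = n2 then v * (g n k2 - g n k2') else 0) := by
    intro n
    unfold Pmat
    by_cases h1 : n = n1 <;> by_cases h2 : n = n2 <;>
      simp [h1, h2, add_mul, sub_mul, ite_mul, Finset.sum_add_distrib,
        Finset.sum_sub_distrib, Finset.sum_ite_eq'] <;> try ring
  rw [Finset.sum_congr rfl fun n _ => h n]
  simp [Finset.sum_add_distrib, Finset.sum_ite_eq']

lemma hyper_null {N K : ℕ} (n1 n2 : Fin N) (k1 k1' k2 k2' : Fin K) (u v : ℝ)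
    (hn : n1 ≠ n2) (hk1 : k1 ≠ k1') (hk2 : k2 ≠ k2') (huv : u ≠ 0 ∨ v ≠ 0) :
    volume {a : Fin N → Fin K → ℝ |
      u * (a n1 k1 - a n1 k1') + v * (a n2 k2 - a n2 k2') = 0} = 0 := by
  classical
  let e : Fin N → Fin K → ((Fin N → Fin K → ℝ) →ₗ[ℝ] ℝ) := fun n k =>
    (LinearMap.proj k : (Fin K → ℝ) →ₗ[ℝ] ℝ).comp
      ((LinearMap.proj n : (Fin N → Fin K → ℝ) →ₗ[ℝ] (Fin K → ℝ)))
  let L : (Fin N → Fin K → ℝ) →ₗ[ℝ] ℝ :=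
    u • (e n1 k1 - e n1 k1') + v • (e n2 k2 - e n2 k2')
  have hLa : ∀ a, L a = u * (a n1 k1 - a n1 k1') + v * (a n2 k2 - a n2 k2') := by
    intro a; simp [L, e]
  have hset : {a : Fin N → Fin K → ℝ |
      u * (a n1 k1 - a n1 k1') + v * (a n2 k2 - a n2 k2') = 0}
      = (LinearMap.ker L : Set _) := by
    ext a; simp [LinearMap.mem_ker, hLa]
  have hL : L ≠ 0 := by
    intro h
    rcases huv with hu | hv
    · have h0 := hLa (fun n k => if n = n1 ∧ k = k1 then (1:ℝ) else 0)
      rw [h] at h0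
      simp [Ne.symm hk1, Ne.symm hn] at h0
      exact hu h0.symm
    · have h0 := hLa (fun n k => if n = n2 ∧ k = k2 then (1:ℝ) else 0)
      rw [h] at h0
      simp [Ne.symm hk2, hn] at h0
      exact hv h0.symm
  rw [hset]
  exact Measure.addHaar_submodule _ _ (by simpa [LinearMap.ker_eq_top] using hL)

/-- the coefficients of the zero-cost two-row exchange direction -/
noncomputable def uvp {K : ℕ} (c : Fin K → ℝ) (k1 k1' k2 k2' : Fin K) : ℝ × ℝ :=
  if c k1 - c k1' = 0 ∧ c k2 - c k2' = 0 then (1, 0)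
  else (c k2 - c k2', -(c k1 - c k1'))

lemma uvp_ne {K : ℕ} (c : Fin K → ℝ) (k1 k1' k2 k2' : Fin K) :
    (uvp c k1 k1' k2 k2').1 ≠ 0 ∨ (uvp c k1 k1' k2 k2').2 ≠ 0 := by
  unfold uvp
  split
  · left; norm_num
  · rename_i h
    rw [not_and_or] at h
    rcases h with h | h
    · right; simp only [neg_ne_zero]; exact h
    · left; exact h

lemma uvp_cost {K : ℕ} (c : Fin K → ℝ) (k1 k1' k2 k2' : Fin K) :
    (uvp c k1 k1' k2 k2').1 * (c k1 - c k1')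
      + (uvp c k1 k1' k2 k2').2 * (c k2 - c k2') = 0 := by
  unfold uvp
  split
  · rename_i h; simp [h.1]
  · simp; ring

lemma good_row {K : ℕ} (z : Fin K → ℝ) (hbox : ∀ k, 0 ≤ z k) (hsum : ∑ k, z k = 1)
    (h : (Finset.univ.filter fun k' => z k' ≠ 0).card = 1) : ∀ k, z k = 0 ∨ z k = 1 := by
  obtain ⟨k0, hk0⟩ := Finset.card_eq_one.1 h
  have hz : ∀ k, k ≠ k0 → z k = 0 := by
    intro k hk
    by_contra h0
    have hmem : k ∈ Finset.univ.filter (fun k' => z k' ≠ 0) :=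
      Finset.mem_filter.2 ⟨Finset.mem_univ _, h0⟩
    rw [hk0] at hmem
    exact hk (Finset.mem_singleton.1 hmem)
  have hk0v : z k0 = 1 := by
    rw [← hsum]
    exact (Finset.sum_eq_single k0 (fun b _ hb => hz b hb)
      (fun h => absurd (Finset.mem_univ k0) h)).symm
  intro k
  by_cases hk : k = k0
  · right; rw [hk]; exact hk0v
  · left; exact hz k hk

set_option maxHeartbeats 1000000 in
lemma sparsity {N K : ℕ} (hN : 0 < N) (c : Fin K → ℝ) (b : ℝ)
    (a ZLP : Fin N → Fin K → ℝ)
    (hkey : ∀ (n1 n2 : Fin N) (k1 k1' k2 k2' : Fin K), n1 ≠ n2 → k1 ≠ k1' → k2 ≠ k2' →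
      (uvp c k1 k1' k2 k2').1 * (a n1 k1 - a n1 k1')
        + (uvp c k1 k1' k2 k2').2 * (a n2 k2 - a n2 k2') ≠ 0)
    (hbox : ∀ n k, ZLP n k ∈ Set.Icc (0:ℝ) 1)
    (hcost : (1 / N : ℝ) * ∑ n, ∑ k, ZLP n k * c k ≤ b)
    (hrow : ∀ n, ∑ k, ZLP n k = 1)
    (hopt : ∀ W : Fin N → Fin K → ℝ,
        (∀ n k, W n k ∈ Set.Icc (0:ℝ) 1) →
        (1 / N : ℝ) * ∑ n, ∑ k, W n k * c k ≤ b →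
        (∀ n, ∑ k, W n k = 1) →
        (1 / N : ℝ) * ∑ n, ∑ k, W n k * a n k ≤
          (1 / N : ℝ) * ∑ n, ∑ k, ZLP n k * a n k)
    (n1 n2 : Fin N)
    (h1 : ¬ (Finset.univ.filter fun k' => ZLP n1 k' ≠ 0).card = 1)
    (h2 : ¬ (Finset.univ.filter fun k' => ZLP n2 k' ≠ 0).card = 1) :
    n1 = n2 := by
  classical
  by_contra hne
  have two : ∀ n, ¬ (Finset.univ.filter fun k' => ZLP n k' ≠ 0).card = 1 →
      ∃ k k', k ≠ k' ∧ ZLP n k ∈ Set.Ioo (0:ℝ) 1 ∧ ZLP n k' ∈ Set.Ioo (0:ℝ) 1 := by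
    intro n hb
    have hne0 : (Finset.univ.filter fun k' => ZLP n k' ≠ 0).Nonempty := by
      by_contra hempty
      rw [Finset.not_nonempty_iff_eq_empty] at hempty
      have hz : ∑ k, ZLP n k = 0 := Finset.sum_eq_zero (fun k _ => by
        by_contra hk
        have hmem : k ∈ Finset.univ.filter fun k' => ZLP n k' ≠ 0 :=
          Finset.mem_filter.2 ⟨Finset.mem_univ _, hk⟩
        rw [hempty] at hmem
        exact absurd hmem (Finset.notMem_empty k))
      rw [hrow n] at hz; norm_num at hz
    have hcard : 1 < (Finset.univ.filter fun k' => ZLP n k' ≠ 0).card :=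
      lt_of_le_of_ne (Finset.one_le_card.2 hne0) (Ne.symm hb)
    obtain ⟨k, hk, k', hk', hkk'⟩ := Finset.one_lt_card.1 hcard
    have hkpos : 0 < ZLP n k :=
      lt_of_le_of_ne (hbox n k).1 (Ne.symm (Finset.mem_filter.1 hk).2)
    have hkpos' : 0 < ZLP n k' :=
      lt_of_le_of_ne (hbox n k').1 (Ne.symm (Finset.mem_filter.1 hk').2)
    have hsum : ZLP n k + ZLP n k' ≤ 1 := by
      have hle := Finset.sum_le_sum_of_subset_of_nonneg
        (Finset.subset_univ ({k, k'} : Finset (Fin K))) (fun i _ _ => (hbox n i).1)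
      rw [Finset.sum_pair hkk', hrow n] at hle
      exact hle
    exact ⟨k, k', hkk', ⟨hkpos, by linarith⟩, ⟨hkpos', by linarith⟩⟩
  obtain ⟨k1, k1', hk1, hf1, hf1'⟩ := two n1 h1
  obtain ⟨k2, k2', hk2, hf2, hf2'⟩ := two n2 h2
  set u := (uvp c k1 k1' k2 k2').1 with hu
  set v := (uvp c k1 k1' k2 k2').2 with hv
  have hcost0 : u * (c k1 - c k1') + v * (c k2 - c k2') = 0 := uvp_cost c k1 k1' k2 k2'
  set D := u * (a n1 k1 - a n1 k1') + v * (a n2 k2 - a n2 k2') with hDdef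
  have hDne : D ≠ 0 := hkey n1 n2 k1 k1' k2 k2' hne hk1 hk2
  set m := min (min (min (ZLP n1 k1) (1 - ZLP n1 k1)) (min (ZLP n1 k1') (1 - ZLP n1 k1')))
      (min (min (ZLP n2 k2) (1 - ZLP n2 k2)) (min (ZLP n2 k2') (1 - ZLP n2 k2'))) with hmdef
  have hmpos : 0 < m := by
    simp only [hmdef, lt_min_iff]
    refine ⟨⟨⟨?_, ?_⟩, ?_, ?_⟩, ⟨?_, ?_⟩, ?_, ?_⟩ <;>
      linarith [hf1.1, hf1.2, hf1'.1, hf1'.2, hf2.1, hf2.2, hf2'.1, hf2'.2]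
  have hm1 : m ≤ ZLP n1 k1 := by simp [hmdef, min_le_iff]
  have hm2 : m ≤ 1 - ZLP n1 k1 := by simp [hmdef, min_le_iff]
  have hm3 : m ≤ ZLP n1 k1' := by simp [hmdef, min_le_iff]
  have hm4 : m ≤ 1 - ZLP n1 k1' := by simp [hmdef, min_le_iff]
  have hm5 : m ≤ ZLP n2 k2 := by simp [hmdef, min_le_iff]
  have hm6 : m ≤ 1 - ZLP n2 k2 := by simp [hmdef, min_le_iff]
  have hm7 : m ≤ ZLP n2 k2' := by simp [hmdef, min_le_iff]
  have hm8 : m ≤ 1 - ZLP n2 k2' := by simp [hmdef, min_le_iff]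
  set S := |u| + |v| + 1 with hSdef
  have hS : 0 < S := by positivity
  set t := (if 0 < D then 1 else -1) * (m / S) with htdef
  have habs_t : |t| = m / S := by
    rw [htdef, abs_mul]
    have : (0:ℝ) ≤ m / S := div_nonneg hmpos.le hS.le
    split <;> simp [abs_of_nonneg this]
  have htu : |t * u| ≤ m := by
    rw [abs_mul, habs_t]
    calc m / S * |u| ≤ m / S * S := by
          apply mul_le_mul_of_nonneg_left _ (div_nonneg hmpos.le hS.le)
          rw [hSdef]
          linarith [abs_nonneg u, abs_nonneg v]
      _ = m := div_mul_cancel₀ m hS.ne'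
  have htv : |t * v| ≤ m := by
    rw [abs_mul, habs_t]
    calc m / S * |v| ≤ m / S * S := by
          apply mul_le_mul_of_nonneg_left _ (div_nonneg hmpos.le hS.le)
          rw [hSdef]
          linarith [abs_nonneg u, abs_nonneg v]
      _ = m := div_mul_cancel₀ m hS.ne'
  have htD : 0 < t * D := by
    rw [htdef]
    by_cases hD0 : 0 < D
    · simp only [if_pos hD0, one_mul]
      exact mul_pos (div_pos hmpos hS) hD0
    · have hDneg : D < 0 := lt_of_le_of_ne (not_lt.1 hD0) hDne
      simp only [if_neg hD0]
      have := mul_pos (div_pos hmpos hS) (neg_pos.2 hDneg)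
      nlinarith
  set W := fun n k => ZLP n k + t * Pmat n1 n2 k1 k1' k2 k2' u v n k with hWdef
  have hWrow : ∀ n, ∑ k, W n k = 1 := by
    intro n
    simp [hWdef, Finset.sum_add_distrib, ← Finset.mul_sum, Prow, hrow n]
  have hWg : ∀ g : Fin N → Fin K → ℝ, ∑ n, ∑ k, W n k * g n k
      = (∑ n, ∑ k, ZLP n k * g n k)
        + t * (u * (g n1 k1 - g n1 k1') + v * (g n2 k2 - g n2 k2')) := by
    intro g
    rw [← Psum n1 n2 k1 k1' k2 k2' hne u v g]
    simp [hWdef, add_mul, Finset.sum_add_distrib, Finset.mul_sum, mul_assoc]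
  have hWcost : (1 / N : ℝ) * ∑ n, ∑ k, W n k * c k ≤ b := by
    have hg := hWg (fun _ k => c k)
    rw [hg, hcost0, mul_zero, add_zero]
    exact hcost
  have hWbox : ∀ n k, W n k ∈ Set.Icc (0:ℝ) 1 := by
    intro n k
    have ha1 := abs_le.1 htu
    have ha2 := abs_le.1 htv
    rw [Set.mem_Icc]
    simp only [hWdef, Pmat]
    have hne' : n2 ≠ n1 := Ne.symm hne
    by_cases e1 : n = n1
    · by_cases f1 : k = k1
      · simp [e1, hne, f1, hk1]
        constructor <;> linarith [ha1.1, ha1.2, hm1, hm2]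
      · by_cases f2 : k = k1'
        · simp [e1, hne, f1, f2, Ne.symm hk1]
          constructor <;> linarith [ha1.1, ha1.2, hm3, hm4]
        · simp [e1, hne, f1, f2]
          exact hbox n1 k
    · by_cases e2 : n = n2
      · by_cases f1 : k = k2
        · simp [e2, hne', f1, hk2]
          constructor <;> linarith [ha2.1, ha2.2, hm5, hm6]
        · by_cases f2 : k = k2'
          · simp [e2, hne', f1, f2, Ne.symm hk2]
            constructor <;> linarith [ha2.1, ha2.2, hm7, hm8]
          · simp [e2, hne', f1, f2]
            exact hbox n2 k
      · simp [e1, e2]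
        exact hbox n k
  have hcontra := hopt W hWbox hWcost hWrow
  rw [hWg a] at hcontra
  have h1N : (0:ℝ) < 1 / N := by
    apply div_pos one_pos
    exact_mod_cast hN
  nlinarith [mul_pos h1N htD]

/-- Offline guarantee: almost surely over the accuracy values, rounding any optimal
LP solution (assigning the zero-cost base service on rows with not exactly one
nonzero entry) gives a feasible ILP solution whose average accuracy is within 1/N
of every feasible ILP solution's average accuracy. -/
theorem stmt_6 {N K : ℕ} (hN : 0 < N) (hK : 0 < K)
    (c : Fin K → ℝ) (base : Fin K) (b : ℝ)
    (hc : ∀ k, 0 ≤ c k) (hbase : c base = 0)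
    (μ : Measure (Fin N → Fin K → ℝ)) [IsProbabilityMeasure μ]
    (hac : μ ≪ volume)
    (hsupp : ∀ᵐ a ∂μ, ∀ n k, a n k ∈ Set.Icc (0:ℝ) 1) :
    ∀ᵐ a ∂μ, ∀ ZLP : Fin N → Fin K → ℝ,
      (∀ n k, ZLP n k ∈ Set.Icc (0:ℝ) 1) →
      (1 / N : ℝ) * ∑ n, ∑ k, ZLP n k * c k ≤ b →
      (∀ n, ∑ k, ZLP n k = 1) →
      (∀ W : Fin N → Fin K → ℝ,
        (∀ n k, W n k ∈ Set.Icc (0:ℝ) 1) →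
        (1 / N : ℝ) * ∑ n, ∑ k, W n k * c k ≤ b →
        (∀ n, ∑ k, W n k = 1) →
        (1 / N : ℝ) * ∑ n, ∑ k, W n k * a n k ≤
          (1 / N : ℝ) * ∑ n, ∑ k, ZLP n k * a n k) →
      (let Z' : Fin N → Fin K → ℝ := fun n k =>
        if (((Finset.univ : Finset (Fin K)).filter fun k' => ZLP n k' ≠ 0)).card = 1
        then ZLP n k else (if k = base then 1 else 0);
      ((∀ n k, Z' n k = 0 ∨ Z' n k = 1) ∧
        (1 / N : ℝ) * ∑ n, ∑ k, Z' n k * c k ≤ b ∧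
        (∀ n, ∑ k, Z' n k = 1)) ∧
      ∀ Z : Fin N → Fin K → ℝ,
        (∀ n k, Z n k = 0 ∨ Z n k = 1) →
        (1 / N : ℝ) * ∑ n, ∑ k, Z n k * c k ≤ b →
        (∀ n, ∑ k, Z n k = 1) →
        (1 / N : ℝ) * ∑ n, ∑ k, Z n k * a n k - 1 / N ≤
          (1 / N : ℝ) * ∑ n, ∑ k, Z' n k * a n k) := by
  classical
  have key : ∀ᵐ a ∂μ, ∀ (n1 n2 : Fin N) (k1 k1' k2 k2' : Fin K),
      n1 ≠ n2 → k1 ≠ k1' → k2 ≠ k2' →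
      (uvp c k1 k1' k2 k2').1 * (a n1 k1 - a n1 k1')
        + (uvp c k1 k1' k2 k2').2 * (a n2 k2 - a n2 k2') ≠ 0 := by
    refine (ae_all_iff).2 fun n1 => (ae_all_iff).2 fun n2 => (ae_all_iff).2 fun k1 =>
      (ae_all_iff).2 fun k1' => (ae_all_iff).2 fun k2 => (ae_all_iff).2 fun k2' => ?_
    by_cases h : n1 ≠ n2 ∧ k1 ≠ k1' ∧ k2 ≠ k2'
    · obtain ⟨ha1, ha2, ha3⟩ := h
      have h0 : μ {a : Fin N → Fin K → ℝ |
          (uvp c k1 k1' k2 k2').1 * (a n1 k1 - a n1 k1')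
            + (uvp c k1 k1' k2 k2').2 * (a n2 k2 - a n2 k2') = 0} = 0 :=
        hac (hyper_null n1 n2 k1 k1' k2 k2' _ _ ha1 ha2 ha3 (uvp_ne c k1 k1' k2 k2'))
      have h1 : ∀ᵐ a ∂μ, (uvp c k1 k1' k2 k2').1 * (a n1 k1 - a n1 k1')
          + (uvp c k1 k1' k2 k2').2 * (a n2 k2 - a n2 k2') ≠ 0 := by
        rw [ae_iff]; simpa using h0
      filter_upwards [h1] with a ha _ _ _
      exact ha
    · filter_upwards with a ha1 ha2 ha3
      exact absurd ⟨ha1, ha2, ha3⟩ h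
  filter_upwards [hsupp, key] with a hA hkey
  intro ZLP hbox hcostZ hrowZ hopt
  intro Z'
  have hZ'g : ∀ n, ((Finset.univ : Finset (Fin K)).filter fun k' => ZLP n k' ≠ 0).card = 1 →
      ∀ k, Z' n k = ZLP n k := by
    intro n hg k; simp only [Z', if_pos hg]
  have hZ'b : ∀ n, ¬ ((Finset.univ : Finset (Fin K)).filter fun k' => ZLP n k' ≠ 0).card = 1 →
      ∀ k, Z' n k = if k = base then 1 else 0 := by
    intro n hg k; simp only [Z', if_neg hg]
  have h1N : (0:ℝ) < 1 / N := div_pos one_pos (by exact_mod_cast hN)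
  -- part 1: 0/1 entries
  have part1 : ∀ n k, Z' n k = 0 ∨ Z' n k = 1 := by
    intro n k
    by_cases hg : ((Finset.univ : Finset (Fin K)).filter fun k' => ZLP n k' ≠ 0).card = 1
    · rw [hZ'g n hg k]
      exact good_row (ZLP n) (fun k => (hbox n k).1) (hrowZ n) hg k
    · rw [hZ'b n hg k]
      by_cases hb : k = base <;> simp [hb]
  -- part 2: rows sum to one
  have part2 : ∀ n, ∑ k, Z' n k = 1 := by
    intro n
    by_cases hg : ((Finset.univ : Finset (Fin K)).filter fun k' => ZLP n k' ≠ 0).card = 1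
    · rw [Finset.sum_congr rfl fun k _ => hZ'g n hg k]; exact hrowZ n
    · rw [Finset.sum_congr rfl fun k _ => hZ'b n hg k]
      simp
  -- part 3: budget
  have part3 : (1 / N : ℝ) * ∑ n, ∑ k, Z' n k * c k ≤ b := by
    refine le_trans ?_ hcostZ
    apply mul_le_mul_of_nonneg_left _ h1N.le
    apply Finset.sum_le_sum
    intro n _
    by_cases hg : ((Finset.univ : Finset (Fin K)).filter fun k' => ZLP n k' ≠ 0).card = 1
    · have he : ∑ k, Z' n k * c k = ∑ k, ZLP n k * c k :=
        Finset.sum_congr rfl fun k _ => by rw [hZ'g n hg k]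
      rw [he]
    · have he : ∑ k, Z' n k * c k = ∑ k, (if k = base then (1:ℝ) else 0) * c k :=
        Finset.sum_congr rfl fun k _ => by rw [hZ'b n hg k]
      rw [he]
      have he2 : ∑ k, (if k = base then (1:ℝ) else 0) * c k = c base := by
        simp [ite_mul]
      rw [he2, hbase]
      exact Finset.sum_nonneg fun k _ => mul_nonneg (hbox n k).1 (hc k)
  refine ⟨⟨part1, part3, part2⟩, ?_⟩
  -- part 4: near-optimality
  intro Z hZ01 hZcost hZrow
  have hZbox : ∀ n k, Z n k ∈ Set.Icc (0:ℝ) 1 := by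
    intro n k
    rcases hZ01 n k with h | h <;> rw [h] <;> constructor <;> norm_num
  have hZle := hopt Z hZbox hZcost hZrow
  set B := Finset.univ.filter
    (fun n => ¬ ((Finset.univ : Finset (Fin K)).filter fun k' => ZLP n k' ≠ 0).card = 1)
    with hBdef
  have hBcard : B.card ≤ 1 := by
    rw [Finset.card_le_one]
    intro x hx y hy
    exact sparsity hN c b a ZLP hkey hbox hcostZ hrowZ hopt x y
      (Finset.mem_filter.1 hx).2 (Finset.mem_filter.1 hy).2
  have hdiff : (∑ n, ∑ k, ZLP n k * a n k) - (∑ n, ∑ k, Z' n k * a n k) ≤ (B.card : ℝ) := by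
    rw [← Finset.sum_sub_distrib]
    calc ∑ n, ((∑ k, ZLP n k * a n k) - ∑ k, Z' n k * a n k)
        ≤ ∑ n, (if n ∈ B then (1:ℝ) else 0) := by
          apply Finset.sum_le_sum
          intro n _
          by_cases hg : ((Finset.univ : Finset (Fin K)).filter fun k' => ZLP n k' ≠ 0).card = 1
          · have hn : n ∉ B := by simp [hBdef, hg]
            have he : ∑ k, Z' n k * a n k = ∑ k, ZLP n k * a n k :=
              Finset.sum_congr rfl fun k _ => by rw [hZ'g n hg k]
            rw [he]
            simp [hn]
          · have hn : n ∈ B := by simp [hBdef, hg]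
            have he : ∑ k, Z' n k * a n k = ∑ k, (if k = base then (1:ℝ) else 0) * a n k :=
              Finset.sum_congr rfl fun k _ => by rw [hZ'b n hg k]
            have h2 : ∑ k, (if k = base then (1:ℝ) else 0) * a n k = a n base := by
              simp [ite_mul]
            have h3 : ∑ k, ZLP n k * a n k ≤ 1 := by
              rw [← hrowZ n]
              exact Finset.sum_le_sum fun k _ =>
                mul_le_of_le_one_right (hbox n k).1 (hA n k).2
            rw [he, h2, if_pos hn]
            linarith [(hA n base).1, h3]
      _ = (B.card : ℝ) := by
          rw [Finset.sum_ite_mem, Finset.univ_inter, Finset.sum_const, nsmul_eq_mul, mul_one]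
  have hfin : (1 / N : ℝ) * ∑ n, ∑ k, ZLP n k * a n k
      ≤ (1 / N : ℝ) * ∑ n, ∑ k, Z' n k * a n k + 1 / N := by
    have hd1 : (∑ n, ∑ k, ZLP n k * a n k) - (∑ n, ∑ k, Z' n k * a n k) ≤ 1 := by
      refine hdiff.trans ?_
      exact_mod_cast hBcard
    nlinarith [h1N]
  linarith [hZle, hfin]
end

section
/- In the API selection setting, let p* be an optimal dual price and define the strategy s^{p*}(x_n) = argmax_k (a_k(x_n) − c_k·p*), with ties broken in favor of the smallest cost. Assume the accuracy values a_k(x_n) ∈ [0,1] are drawn from a continuous distribution, costs c_k ≥ 0 with c_{base} = 0. Then with probability 1, the deterministic assignment Z̃ defined by Z̃_{n,k} = 1_{s^{p*}(x_n) = k} is feasible for the ILP (satisfies (1/N)∑_{n,k} Z̃_{n,k} c_k ≤ b and each row sums to 1), and its average accuracy is at least the ILP optimal average accuracy minus 1/N. -/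
set_option maxHeartbeats 1000000

open MeasureTheory


lemma hyperplane_null {N K : ℕ} (c : Fin K → ℝ) (n m : Fin N) (k j k' j' : Fin K)
    (hnm : n ≠ m) (hkj : c k ≠ c j) (hk'j' : c k' ≠ c j') :
    volume {a : Fin N → Fin K → ℝ |
      (a n k - a n j) * (c k' - c j') = (a m k' - a m j') * (c k - c j)} = 0 := by
  set ev : Fin N → Fin K → ((Fin N → Fin K → ℝ) →ₗ[ℝ] ℝ) := fun i l =>
    (LinearMap.proj l).comp (LinearMap.proj (R := ℝ) (φ := fun _ : Fin N => Fin K → ℝ) i)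
    with hev
  set L : (Fin N → Fin K → ℝ) →ₗ[ℝ] ℝ :=
    (c k' - c j') • (ev n k - ev n j) - (c k - c j) • (ev m k' - ev m j') with hL
  have hset : {a : Fin N → Fin K → ℝ |
      (a n k - a n j) * (c k' - c j') = (a m k' - a m j') * (c k - c j)} =
      (LinearMap.ker L : Set (Fin N → Fin K → ℝ)) := by
    ext a
    simp only [Set.mem_setOf_eq, SetLike.mem_coe, LinearMap.mem_ker, hL, hev,
      LinearMap.sub_apply, LinearMap.smul_apply, LinearMap.comp_apply, LinearMap.proj_apply,
      smul_eq_mul]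
    constructor
    · intro h; linarith [h]
    · intro h; linarith [h]
  rw [hset]
  apply Measure.addHaar_submodule
  intro htop
  have hkj' : k ≠ j := fun h => hkj (by rw [h])
  set a₀ : Fin N → Fin K → ℝ := fun i l => if i = n ∧ l = k then 1 else 0 with ha₀
  have : L a₀ = 0 := by
    have : a₀ ∈ LinearMap.ker L := htop ▸ Submodule.mem_top
    exact this
  apply hk'j'
  have hval : L a₀ = c k' - c j' := by
    simp only [hL, hev, LinearMap.sub_apply, LinearMap.smul_apply, LinearMap.comp_apply,
      LinearMap.proj_apply, smul_eq_mul, ha₀]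
    simp [Ne.symm hnm, Ne.symm hkj']
  rw [this] at hval
  linarith [hval]

open Finset in

lemma main_det_s8 {N K : ℕ} (hN : 0 < N) (hK : 0 < K)
    (c : Fin K → ℝ) (base : Fin K) (b : ℝ)
    (hc : ∀ k, 0 ≤ c k) (hbase : c base = 0)
    (a : Fin N → Fin K → ℝ)
    (H1 : ∀ n k, a n k ∈ Set.Icc (0:ℝ) 1)
    (H2 : ∀ n m : Fin N, ∀ k j k' j' : Fin K, n ≠ m → c k ≠ c j → c k' ≠ c j' →
      (a n k - a n j) * (c k' - c j') ≠ (a m k' - a m j') * (c k - c j)) :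
    ∀ (p : ℝ) (q : Fin N → ℝ),
      0 ≤ p → (∀ n, 0 ≤ q n) →
      (∀ n k, (1 / N : ℝ) * a n k ≤ (1 / N : ℝ) * c k * p + q n) →
      (∀ (p' : ℝ) (q' : Fin N → ℝ), 0 ≤ p' → (∀ n, 0 ≤ q' n) →
        (∀ n k, (1 / N : ℝ) * a n k ≤ (1 / N : ℝ) * c k * p' + q' n) →
        b * p + ∑ n, q n ≤ b * p' + ∑ n, q' n) →
      ∀ s : Fin N → Fin K,
        (∀ n, (∀ k, a n k - c k * p ≤ a n (s n) - c (s n) * p) ∧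
          (∀ k, a n k - c k * p = a n (s n) - c (s n) * p → c (s n) ≤ c k)) →
        (1 / N : ℝ) * ∑ n, c (s n) ≤ b ∧
        ∀ Z : Fin N → Fin K → ℝ,
          (∀ n k, Z n k = 0 ∨ Z n k = 1) →
          (1 / N : ℝ) * ∑ n, ∑ k, Z n k * c k ≤ b →
          (∀ n, ∑ k, Z n k = 1) →
          (1 / N : ℝ) * ∑ n, ∑ k, Z n k * a n k - 1 / N ≤
            (1 / N : ℝ) * ∑ n, a n (s n) := by
  intro p q hp hq hfeas hopt s hs
  haveI : Nonempty (Fin N) := ⟨⟨0, hN⟩⟩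
  haveI : Nonempty (Fin K) := ⟨⟨0, hK⟩⟩
  have hN0 : (0:ℝ) < N := by exact_mod_cast hN
  have hN0' : (0:ℝ) < 1 / N := by positivity
  -- Step A : q n = (1/N) * (a n (s n) - c (s n) * p)
  set q' : Fin N → ℝ := fun n => (1/N:ℝ) * (a n (s n) - c (s n) * p) with hq'def
  have hq'le : ∀ n, q' n ≤ q n := by
    intro n
    have h := hfeas n (s n)
    simp only [hq'def]
    nlinarith [h]
  have hq'nonneg : ∀ n, 0 ≤ q' n := by
    intro n
    have h := (hs n).1 base
    rw [hbase] at h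
    have h0 := (H1 n base).1
    simp only [hq'def]
    nlinarith
  have hq'feas : ∀ n k, (1 / N : ℝ) * a n k ≤ (1 / N : ℝ) * c k * p + q' n := by
    intro n k
    have h := (hs n).1 k
    simp only [hq'def]
    nlinarith
  have hsum : ∑ n, q n ≤ ∑ n, q' n := by
    have := hopt p q' hp hq'nonneg hq'feas
    linarith
  have hqeq : ∀ n, q n = q' n := by
    have hsum' : ∑ n, q' n ≤ ∑ n, q n := Finset.sum_le_sum (fun n _ => hq'le n)
    have heq : ∑ n, q' n = ∑ n, q n := le_antisymm hsum' hsum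
    have := (Finset.sum_eq_sum_iff_of_le (fun n (_ : n ∈ Finset.univ) => hq'le n)).1 heq
    intro n
    exact ((this n (Finset.mem_univ n))).symm
  -- Step B : budget feasibility
  have gap_nonneg : ∀ n k, 0 ≤ (a n (s n) - c (s n) * p) - (a n k - c k * p) := by
    intro n k; have := (hs n).1 k; linarith
  have budget : (1 / N : ℝ) * ∑ n, c (s n) ≤ b := by
    set f : Fin N × Fin K → ℝ := fun nk =>
      if c nk.2 < c (s nk.1) then
        ((a nk.1 (s nk.1) - c (s nk.1) * p) - (a nk.1 nk.2 - c nk.2 * p)) / (c (s nk.1) - c nk.2)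
      else 1 with hfdef
    have hfpos : ∀ nk : Fin N × Fin K, 0 < f nk := by
      intro ⟨n, k⟩
      simp only [hfdef]
      split
      · rename_i hlt
        have hg := gap_nonneg n k
        have hgpos : 0 < (a n (s n) - c (s n) * p) - (a n k - c k * p) := by
          rcases lt_or_eq_of_le hg with h | h
          · exact h
          · exfalso
            have htie : a n k - c k * p = a n (s n) - c (s n) * p := by linarith
            have := (hs n).2 k htie
            linarith
        exact div_pos hgpos (by linarith)
      · norm_num
    obtain ⟨nk₀, -, hnk₀⟩ := Finset.exists_min_image (Finset.univ : Finset (Fin N × Fin K)) f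
      Finset.univ_nonempty
    set ε := min 1 (f nk₀) with hεdef
    have hεpos : 0 < ε := lt_min one_pos (hfpos nk₀)
    have hεle : ∀ nk, ε ≤ f nk := fun nk => le_trans (min_le_right _ _) (hnk₀ nk (Finset.mem_univ _))
    have key : ∀ n k, a n k - c k * (p + ε) ≤ a n (s n) - c (s n) * (p + ε) := by
      intro n k
      have hg := gap_nonneg n k
      rcases le_or_gt (c (s n)) (c k) with h | h
      · nlinarith [hεpos.le]
      · have h1 := hεle ⟨n, k⟩
        simp only [hfdef] at h1
        rw [if_pos h] at h1
        have h2 : ε * (c (s n) - c k) ≤ (a n (s n) - c (s n) * p) - (a n k - c k * p) :=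
          (le_div_iff₀ (by linarith)).1 h1
        nlinarith
    set q'' : Fin N → ℝ := fun n => (1/N:ℝ) * (a n (s n) - c (s n) * (p + ε)) with hq''def
    have h1 : ∀ n, 0 ≤ q'' n := by
      intro n
      have h := key n base
      rw [hbase] at h
      have h0 := (H1 n base).1
      simp only [hq''def]
      nlinarith
    have h2 : ∀ n k, (1 / N : ℝ) * a n k ≤ (1 / N : ℝ) * c k * (p + ε) + q'' n := by
      intro n k
      have h := key n k
      simp only [hq''def]
      nlinarith
    have h3 := hopt (p + ε) q'' (by linarith) h1 h2
    have h4 : ∑ n, q n = ∑ n, q' n := Finset.sum_congr rfl (fun n _ => hqeq n)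
    have h5 : ∑ n, q'' n = ∑ n, q' n - ε * ((1/N:ℝ) * ∑ n, c (s n)) := by
      calc ∑ n, q'' n = ∑ n, (q' n - ε * ((1/N:ℝ) * c (s n))) :=
            Finset.sum_congr rfl (fun n _ => by simp only [hq'def, hq''def]; ring)
      _ = ∑ n, q' n - ∑ n, ε * ((1/N:ℝ) * c (s n)) := Finset.sum_sub_distrib _ _
      _ = ∑ n, q' n - ε * ((1/N:ℝ) * ∑ n, c (s n)) := by
            rw [Finset.mul_sum, Finset.mul_sum]
    rw [h4, h5] at h3
    have h6 : ε * ((1/N:ℝ) * ∑ n, c (s n)) ≤ ε * b := by nlinarith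
    exact le_of_mul_le_mul_left h6 hεpos
  refine ⟨budget, ?_⟩
  -- Step D+E : p * (b - (1/N) * ∑ c (s n)) ≤ 1/N
  have slack : p * (b - (1/N:ℝ) * ∑ n, c (s n)) ≤ 1/N := by
    rcases eq_or_lt_of_le hp with hp0 | hp0
    · rw [← hp0, zero_mul]; positivity
    -- construct t : argmax with largest cost
    have ht' : ∀ n, ∃ k, (a n k - c k * p = a n (s n) - c (s n) * p) ∧
        ∀ j, a n j - c j * p = a n (s n) - c (s n) * p → c j ≤ c k := by
      intro n
      obtain ⟨k, hk, hkmax⟩ := Finset.exists_max_image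
        (Finset.univ.filter (fun k => a n k - c k * p = a n (s n) - c (s n) * p)) c
        ⟨s n, by simp⟩
      refine ⟨k, (Finset.mem_filter.1 hk).2, fun j hj => hkmax j ?_⟩
      simp [hj]
    choose t ht using ht'
    have hcst : ∀ n, c (s n) ≤ c (t n) := fun n => (ht n).2 (s n) rfl
    have hterm : ∀ n, a n (t n) - a n (s n) = p * (c (t n) - c (s n)) := by
      intro n
      linear_combination (ht n).1
    -- at most one n where costs differ
    have hone : ∀ n m, n ≠ m → c (t n) = c (s n) ∨ c (t m) = c (s m) := by
      intro n m hnm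
      by_contra hcon
      push_neg at hcon
      obtain ⟨h1, h2⟩ := hcon
      refine H2 n m (t n) (s n) (t m) (s m) hnm h1 h2 ?_
      rw [hterm n, hterm m]
      ring
    -- perturbation p - ε'
    have hbt : b ≤ (1/N:ℝ) * ∑ n, c (t n) := by
      set f : Fin N × Fin K → ℝ := fun nk =>
        if c (t nk.1) < c nk.2 then
          ((a nk.1 (s nk.1) - c (s nk.1) * p) - (a nk.1 nk.2 - c nk.2 * p)) / (c nk.2 - c (t nk.1))
        else p with hfdef
      have hfpos : ∀ nk : Fin N × Fin K, 0 < f nk := by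
        intro ⟨n, k⟩
        simp only [hfdef]
        split
        · rename_i hlt
          have hg := gap_nonneg n k
          have hgpos : 0 < (a n (s n) - c (s n) * p) - (a n k - c k * p) := by
            rcases lt_or_eq_of_le hg with h | h
            · exact h
            · exfalso
              have htie : a n k - c k * p = a n (s n) - c (s n) * p := by linarith
              have := (ht n).2 k htie
              linarith
          exact div_pos hgpos (by linarith)
        · exact hp0
      obtain ⟨nk₀, -, hnk₀⟩ := Finset.exists_min_image (Finset.univ : Finset (Fin N × Fin K)) f
        Finset.univ_nonempty
      set ε := min p (f nk₀) with hεdef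
      have hεpos : 0 < ε := lt_min hp0 (hfpos nk₀)
      have hεp : ε ≤ p := min_le_left _ _
      have hεle : ∀ nk, ε ≤ f nk := fun nk =>
        le_trans (min_le_right _ _) (hnk₀ nk (Finset.mem_univ _))
      have key : ∀ n k, a n k - c k * (p - ε) ≤ a n (t n) - c (t n) * (p - ε) := by
        intro n k
        have hg := gap_nonneg n k
        have he := (ht n).1
        rcases le_or_gt (c k) (c (t n)) with h | h
        · nlinarith [hεpos.le]
        · have h1 := hεle ⟨n, k⟩
          simp only [hfdef] at h1
          rw [if_pos h] at h1
          have h2 : ε * (c k - c (t n)) ≤ (a n (s n) - c (s n) * p) - (a n k - c k * p) :=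
            (le_div_iff₀ (by linarith)).1 h1
          nlinarith
      set q''' : Fin N → ℝ := fun n => (1/N:ℝ) * (a n (t n) - c (t n) * (p - ε)) with hq3def
      have h1 : ∀ n, 0 ≤ q''' n := by
        intro n
        have h := key n base
        rw [hbase] at h
        have h0 := (H1 n base).1
        simp only [hq3def]
        nlinarith
      have h2 : ∀ n k, (1 / N : ℝ) * a n k ≤ (1 / N : ℝ) * c k * (p - ε) + q''' n := by
        intro n k
        have h := key n k
        simp only [hq3def]
        nlinarith
      have h3 := hopt (p - ε) q''' (by linarith) h1 h2
      have h4 : ∑ n, q n = ∑ n, q' n := Finset.sum_congr rfl (fun n _ => hqeq n)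
      have h5 : ∑ n, q''' n = ∑ n, q' n + ε * ((1/N:ℝ) * ∑ n, c (t n)) := by
        calc ∑ n, q''' n = ∑ n, (q' n + ε * ((1/N:ℝ) * c (t n))) :=
              Finset.sum_congr rfl (fun n _ => by
                simp only [hq'def, hq3def]
                linear_combination ((1:ℝ)/N) * (ht n).1)
        _ = ∑ n, q' n + ∑ n, ε * ((1/N:ℝ) * c (t n)) := Finset.sum_add_distrib
        _ = ∑ n, q' n + ε * ((1/N:ℝ) * ∑ n, c (t n)) := by
              rw [Finset.mul_sum, Finset.mul_sum]
      rw [h4, h5] at h3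
      have h6 : ε * b ≤ ε * ((1/N:ℝ) * ∑ n, c (t n)) := by nlinarith
      exact le_of_mul_le_mul_left h6 hεpos
    -- sum of accuracy differences is at most 1
    have hsum1 : ∑ n, (a n (t n) - a n (s n)) ≤ 1 := by
      by_cases hall : ∀ n, c (t n) = c (s n)
      · have : ∑ n, (a n (t n) - a n (s n)) = 0 := by
          apply Finset.sum_eq_zero
          intro n _
          rw [hterm n, hall n]; ring
        rw [this]; norm_num
      · push_neg at hall
        obtain ⟨n₀, hn₀⟩ := hall
        have hz : ∀ m ∈ Finset.univ, m ≠ n₀ → a m (t m) - a m (s m) = 0 := by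
          intro m _ hm
          rcases hone n₀ m (Ne.symm hm) with h | h
          · exact absurd h hn₀
          · rw [hterm m, h]; ring
        rw [Finset.sum_eq_single n₀ hz (fun h => absurd (Finset.mem_univ n₀) h)]
        have h1 := (H1 n₀ (t n₀)).2
        have h2 := (H1 n₀ (s n₀)).1
        linarith
    have hsum2 : ∑ n, (a n (t n) - a n (s n)) = p * (∑ n, c (t n) - ∑ n, c (s n)) := by
      calc ∑ n, (a n (t n) - a n (s n)) = ∑ n, p * (c (t n) - c (s n)) :=
            Finset.sum_congr rfl (fun n _ => hterm n)
      _ = p * ∑ n, (c (t n) - c (s n)) := (Finset.mul_sum _ _ _).symm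
      _ = p * (∑ n, c (t n) - ∑ n, c (s n)) := by rw [Finset.sum_sub_distrib]
    have hb' : p * b ≤ p * ((1/N:ℝ) * ∑ n, c (t n)) := mul_le_mul_of_nonneg_left hbt hp
    have h2 : p * (∑ n, c (t n) - ∑ n, c (s n)) ≤ 1 := hsum2 ▸ hsum1
    have h3 : (1/N:ℝ) * (p * (∑ n, c (t n) - ∑ n, c (s n))) ≤ (1/N:ℝ) * 1 :=
      mul_le_mul_of_nonneg_left h2 hN0'.le
    linarith [hb', h3]
  -- final : bound for any feasible ILP solution
  intro Z hZ01 hZb hZrow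
  have hZnn : ∀ n k, 0 ≤ Z n k := by
    intro n k; rcases hZ01 n k with h | h <;> simp [h]
  have hkey : ∀ n, (1/N:ℝ) * ∑ k, Z n k * a n k ≤ p * ((1/N:ℝ) * ∑ k, Z n k * c k) + q n := by
    intro n
    have hle : ∑ k, Z n k * ((1/N:ℝ) * a n k) ≤ ∑ k, Z n k * ((1/N:ℝ) * c k * p + q n) :=
      Finset.sum_le_sum (fun k _ => mul_le_mul_of_nonneg_left (hfeas n k) (hZnn n k))
    calc (1/N:ℝ) * ∑ k, Z n k * a n k = ∑ k, Z n k * ((1/N:ℝ) * a n k) := by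
          rw [Finset.mul_sum]; exact Finset.sum_congr rfl (fun k _ => by ring)
    _ ≤ ∑ k, Z n k * ((1/N:ℝ) * c k * p + q n) := hle
    _ = p * ((1/N:ℝ) * ∑ k, Z n k * c k) + q n := by
          calc ∑ k, Z n k * ((1/N:ℝ) * c k * p + q n)
              = ∑ k, ((Z n k * c k) * ((1/N:ℝ) * p) + Z n k * q n) :=
                Finset.sum_congr rfl (fun k _ => by ring)
          _ = (∑ k, Z n k * c k) * ((1/N:ℝ) * p) + (∑ k, Z n k) * q n := by
                rw [Finset.sum_add_distrib, Finset.sum_mul, Finset.sum_mul]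
          _ = p * ((1/N:ℝ) * ∑ k, Z n k * c k) + q n := by rw [hZrow n]; ring
  have htot : (1/N:ℝ) * ∑ n, ∑ k, Z n k * a n k ≤
      p * ((1/N:ℝ) * ∑ n, ∑ k, Z n k * c k) + ∑ n, q n := by
    calc (1/N:ℝ) * ∑ n, ∑ k, Z n k * a n k = ∑ n, (1/N:ℝ) * ∑ k, Z n k * a n k :=
          Finset.mul_sum _ _ _
    _ ≤ ∑ n, (p * ((1/N:ℝ) * ∑ k, Z n k * c k) + q n) :=
          Finset.sum_le_sum (fun n _ => hkey n)
    _ = p * ((1/N:ℝ) * ∑ n, ∑ k, Z n k * c k) + ∑ n, q n := by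
          rw [Finset.sum_add_distrib]
          congr 1
          rw [Finset.mul_sum, Finset.mul_sum]
  have hqsum : ∑ n, q n = (1/N:ℝ) * ∑ n, a n (s n) - p * ((1/N:ℝ) * ∑ n, c (s n)) := by
    calc ∑ n, q n = ∑ n, ((1/N:ℝ) * a n (s n) - p * ((1/N:ℝ) * c (s n))) :=
          Finset.sum_congr rfl (fun n _ => by rw [hqeq n]; simp only [hq'def]; ring)
    _ = ∑ n, (1/N:ℝ) * a n (s n) - ∑ n, p * ((1/N:ℝ) * c (s n)) := Finset.sum_sub_distrib _ _
    _ = (1/N:ℝ) * ∑ n, a n (s n) - p * ((1/N:ℝ) * ∑ n, c (s n)) := by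
          rw [← Finset.mul_sum]
          congr 1
          rw [Finset.mul_sum, Finset.mul_sum]
  have hpb : p * ((1/N:ℝ) * ∑ n, ∑ k, Z n k * c k) ≤ p * b := mul_le_mul_of_nonneg_left hZb hp
  rw [hqsum] at htot
  linarith [htot, slack, hpb]

/-- Dual-based selection guarantee: almost surely over the accuracy values, for any
optimal dual solution (p*, q*), the strategy selecting argmax_k (aₖ(xₙ) − cₖ·p*)
with ties broken toward the smallest cost is budget-feasible and achieves average
accuracy within 1/N of every feasible ILP solution. -/
theorem stmt_8 {N K : ℕ} (hN : 0 < N) (hK : 0 < K)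
    (c : Fin K → ℝ) (base : Fin K) (b : ℝ)
    (hc : ∀ k, 0 ≤ c k) (hbase : c base = 0)
    (μ : Measure (Fin N → Fin K → ℝ)) [IsProbabilityMeasure μ]
    (hac : μ ≪ volume)
    (hsupp : ∀ᵐ a ∂μ, ∀ n k, a n k ∈ Set.Icc (0:ℝ) 1) :
    ∀ᵐ a ∂μ, ∀ (p : ℝ) (q : Fin N → ℝ),
      0 ≤ p → (∀ n, 0 ≤ q n) →
      (∀ n k, (1 / N : ℝ) * a n k ≤ (1 / N : ℝ) * c k * p + q n) →
      (∀ (p' : ℝ) (q' : Fin N → ℝ), 0 ≤ p' → (∀ n, 0 ≤ q' n) →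
        (∀ n k, (1 / N : ℝ) * a n k ≤ (1 / N : ℝ) * c k * p' + q' n) →
        b * p + ∑ n, q n ≤ b * p' + ∑ n, q' n) →
      ∀ s : Fin N → Fin K,
        (∀ n, (∀ k, a n k - c k * p ≤ a n (s n) - c (s n) * p) ∧
          (∀ k, a n k - c k * p = a n (s n) - c (s n) * p → c (s n) ≤ c k)) →
        (1 / N : ℝ) * ∑ n, c (s n) ≤ b ∧
        ∀ Z : Fin N → Fin K → ℝ,
          (∀ n k, Z n k = 0 ∨ Z n k = 1) →
          (1 / N : ℝ) * ∑ n, ∑ k, Z n k * c k ≤ b →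
          (∀ n, ∑ k, Z n k = 1) →
          (1 / N : ℝ) * ∑ n, ∑ k, Z n k * a n k - 1 / N ≤
            (1 / N : ℝ) * ∑ n, a n (s n) := by
  have H2ae : ∀ᵐ a ∂μ, ∀ n m : Fin N, ∀ k j k' j' : Fin K, n ≠ m → c k ≠ c j → c k' ≠ c j' →
      (a n k - a n j) * (c k' - c j') ≠ (a m k' - a m j') * (c k - c j) := by
    simp only [MeasureTheory.ae_all_iff]
    intro n m k j k' j'
    intro h1 h2 h3
    have h0 : μ {a : Fin N → Fin K → ℝ |
        (a n k - a n j) * (c k' - c j') = (a m k' - a m j') * (c k - c j)} = 0 :=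
      hac (hyperplane_null c n m k j k' j' h1 h2 h3)
    have hae := measure_eq_zero_iff_ae_notMem.1 h0
    filter_upwards [hae] with a ha
    exact ha
  filter_upwards [hsupp, H2ae] with a h1 h2
  exact main_det_s8 hN hK c base b hc hbase a h1 h2
end

section
/- Let s be a fixed selection strategy with per-sample cost η(x) ∈ [0, C] for some constant C = ‖c‖_∞. Let x₁^{Tr},…,x_{N^{Tr}}^{Tr} and x₁,…,x_N be independent i.i.d. samples from the same distribution. Suppose the empirical training cost satisfies (1/N^{Tr})∑_n η(x_n^{Tr}) ≤ (1−δ)b for δ ≥ (C/b)·[√((log 4 − log ε)/N) + √((log 4 − log ε)/N^{Tr})]. Then with probability at least 1 − ε, the empirical test cost satisfies (1/N)∑_n η(x_n) ≤ b. -/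
open MeasureTheory ProbabilityTheory

section AuxHoeffding
open Real MeasureTheory ProbabilityTheory

lemma amgm2 {x y z : ℝ} (hx : 0 ≤ x) (hy : 0 ≤ y) (hz : 0 ≤ z) (h : z^2 = x*y) :
    2*z ≤ x + y := by
  have h1 : (2*z)^2 ≤ (x+y)^2 := by nlinarith [sq_nonneg (x - y)]
  calc 2*z = Real.sqrt ((2*z)^2) := (Real.sqrt_sq (by linarith)).symm
    _ ≤ Real.sqrt ((x+y)^2) := Real.sqrt_le_sqrt h1
    _ = x + y := Real.sqrt_sq (by linarith)

lemma exp_sub_exp_neg_le {v : ℝ} (h0 : 0 ≤ v) (h1 : v ≤ 1) :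
    Real.exp v - Real.exp (-v) ≤ 4 * v := by
  have hc := convexOn_exp.2 (Set.mem_univ (0:ℝ)) (Set.mem_univ (1:ℝ))
    (by linarith : (0:ℝ) ≤ 1 - v) h0 (by ring)
  simp only [smul_eq_mul, mul_zero, mul_one, zero_add, Real.exp_zero] at hc
  have h3 : 1 - v ≤ Real.exp (-v) := by linarith [Real.add_one_le_exp (-v)]
  have h4 : Real.exp 1 ≤ 4 := by linarith [Real.exp_one_lt_d9]
  nlinarith

lemma key_deriv {p u : ℝ} (hp0 : 0 ≤ p) (hp1 : p ≤ 1) (hu : 0 ≤ u) :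
    p * Real.exp u / ((1 - p) + p * Real.exp u) - p ≤ u / 2 := by
  set E := Real.exp u with hE
  have hE1 : 1 ≤ E := Real.one_le_exp hu
  have hD : (0:ℝ) < (1 - p) + p * E := by nlinarith
  rw [sub_le_iff_le_add, div_le_iff₀ hD]
  rcases le_or_gt 2 u with h2 | h2
  · nlinarith
  · -- u < 2 case
    set r := Real.exp (u/2) with hr
    have hr0 : (0:ℝ) < r := Real.exp_pos _
    have hrE : r^2 = E := by rw [hr, hE, ← Real.exp_nat_mul]; norm_num; ring_nf
    have hrinv : Real.exp (-(u/2)) = r⁻¹ := by rw [Real.exp_neg]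
    have hsinh : r - r⁻¹ ≤ 4 * (u/2) := by
      have := exp_sub_exp_neg_le (by linarith : (0:ℝ) ≤ u/2) (by linarith : u/2 ≤ 1)
      rwa [hrinv] at this
    have hE2u : E - 1 ≤ 2*u*r := by
      have := mul_le_mul_of_nonneg_left hsinh hr0.le
      have hrr : r * r⁻¹ = 1 := mul_inv_cancel₀ hr0.ne'
      nlinarith
    set q := Real.sqrt (p*(1-p)) with hq
    have hq0 : 0 ≤ q := Real.sqrt_nonneg _
    have hq2 : q^2 = p*(1-p) := Real.sq_sqrt (by nlinarith)
    have hqh : q ≤ 1/2 := by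
      have h14 : q^2 ≤ 1/4 := by nlinarith [sq_nonneg (p - 1/2)]
      nlinarith [sq_nonneg (q - 1/2)]
    have hDq : 2*(q*r) ≤ (1-p) + p*E := by
      refine amgm2 (by linarith) (by nlinarith) (by positivity) ?_
      rw [mul_pow, hq2, hrE]; ring
    have hpe : p*E - p*((1-p)+p*E) = q^2*(E-1) := by rw [hq2]; ring
    have hA : q^2*(E-1) ≤ q^2*(2*u*r) := by
      have := mul_le_mul_of_nonneg_left hE2u (sq_nonneg q); linarith
    have hB : q^2*(2*u*r) ≤ (1/2)*q*(2*u*r) := by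
      have h2ur : 0 ≤ 2*u*r := by positivity
      have : q*q ≤ (1/2)*q := by nlinarith
      nlinarith
    have hCx : (u/2)*(2*(q*r)) ≤ (u/2)*((1-p)+p*E) :=
      mul_le_mul_of_nonneg_left hDq (by linarith)
    nlinarith



lemma Dpos {p : ℝ} (hp0 : 0 ≤ p) (hp1 : p ≤ 1) (u : ℝ) :
    (0:ℝ) < (1 - p) + p * Real.exp u := by
  rcases lt_or_eq_of_le hp1 with h | h
  · have := mul_nonneg hp0 (Real.exp_pos u).le; linarith
  · rw [h]; simpa using Real.exp_pos u

lemma log_bound_nonneg {p : ℝ} (hp0 : 0 ≤ p) (hp1 : p ≤ 1) {u : ℝ} (hu : 0 ≤ u) :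
    Real.log ((1 - p) + p * Real.exp u) ≤ p * u + u^2/4 := by
  set f : ℝ → ℝ := fun x => p * x + x^2/4 - Real.log ((1 - p) + p * Real.exp x) with hf
  have hder : ∀ x : ℝ, HasDerivAt f
      (p + x/2 - p * Real.exp x / ((1 - p) + p * Real.exp x)) x := by
    intro x
    have hg : HasDerivAt (fun x => (1 - p) + p * Real.exp x) (p * Real.exp x) x :=
      ((Real.hasDerivAt_exp x).const_mul p).const_add (1 - p)
    have hlog : HasDerivAt (fun x => Real.log ((1 - p) + p * Real.exp x))
        (p * Real.exp x / ((1 - p) + p * Real.exp x)) x :=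
      hg.log (Dpos hp0 hp1 x).ne'
    have h1 : HasDerivAt (fun x : ℝ => p * x + x^2/4) (p + x/2) x := by
      have := ((hasDerivAt_id x).const_mul p).add ((hasDerivAt_pow 2 x).div_const 4)
      exact this.congr_deriv (by simp; ring)
    exact h1.sub hlog
  have hmono : MonotoneOn f (Set.Ici (0:ℝ)) := by
    apply monotoneOn_of_deriv_nonneg (convex_Ici 0)
      (fun x _ => ((hder x).differentiableAt).continuousAt.continuousWithinAt)
      (fun x _ => ((hder x).differentiableAt).differentiableWithinAt)
    intro x hx
    rw [(hder x).deriv]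
    have := key_deriv hp0 hp1 (le_of_lt (by simpa using hx))
    linarith
  have h0 : f 0 = 0 := by simp [hf]
  have := hmono (Set.self_mem_Ici) hu hu
  rw [h0] at this
  simp only [hf] at this
  linarith

lemma log_bound {p : ℝ} (hp0 : 0 ≤ p) (hp1 : p ≤ 1) (u : ℝ) :
    Real.log ((1 - p) + p * Real.exp u) ≤ p * u + u^2/4 := by
  rcases le_or_gt 0 u with hu | hu
  · exact log_bound_nonneg hp0 hp1 hu
  · have key := log_bound_nonneg (p := 1 - p) (by linarith) (by linarith)
      (u := -u) (by linarith)
    have hrw : (1 - p) + p * Real.exp u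
        = Real.exp u * ((1 - (1-p)) + (1-p) * Real.exp (-u)) := by
      have : Real.exp u * Real.exp (-u) = 1 := by rw [← Real.exp_add]; simp
      nlinarith
    rw [hrw, Real.log_mul (Real.exp_pos u).ne' (Dpos (by linarith) (by linarith) (-u)).ne',
      Real.log_exp]
    nlinarith

lemma chord_exp_bound {p : ℝ} (hp0 : 0 ≤ p) (hp1 : p ≤ 1) (u : ℝ) :
    (1 - p) + p * Real.exp u ≤ Real.exp (p * u + u^2/4) := by
  calc (1 - p) + p * Real.exp u
      = Real.exp (Real.log ((1 - p) + p * Real.exp u)) :=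
        (Real.exp_log (Dpos hp0 hp1 u)).symm
    _ ≤ _ := Real.exp_le_exp.2 (log_bound hp0 hp1 u)



variable {Ω : Type*} [MeasurableSpace Ω] (μ : Measure Ω) [IsProbabilityMeasure μ]

lemma integrable_exp_mul_of_bdd {Y : Ω → ℝ} (hY : Measurable Y) {C : ℝ}
    (hb : ∀ᵐ ω ∂μ, Y ω ∈ Set.Icc (0:ℝ) C) (s : ℝ) :
    Integrable (fun ω => Real.exp (s * Y ω)) μ := by
  refine Integrable.mono' (integrable_const (Real.exp (|s| * C)))
    ((hY.const_mul s).exp.aestronglyMeasurable) ?_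
  filter_upwards [hb] with ω hω
  rw [Real.norm_eq_abs, abs_of_pos (Real.exp_pos _), Real.exp_le_exp]
  calc s * Y ω ≤ |s * Y ω| := le_abs_self _
    _ = |s| * |Y ω| := abs_mul _ _
    _ ≤ |s| * C := by
        refine mul_le_mul_of_nonneg_left ?_ (abs_nonneg s)
        rw [abs_of_nonneg hω.1]; exact hω.2

lemma mgf_le_of_bdd {Y : Ω → ℝ} (hY : Measurable Y) {C : ℝ} (hC : 0 < C)
    (hb : ∀ᵐ ω ∂μ, Y ω ∈ Set.Icc (0:ℝ) C) (s : ℝ) :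
    mgf Y μ s ≤ Real.exp (s * (∫ ω, Y ω ∂μ) + s^2 * C^2 / 4) := by
  have hint : Integrable Y μ := by
    refine Integrable.mono' (integrable_const C) hY.aestronglyMeasurable ?_
    filter_upwards [hb] with ω hω
    rw [Real.norm_eq_abs, abs_of_nonneg hω.1]; exact hω.2
  set m := ∫ ω, Y ω ∂μ with hm
  have hm0 : 0 ≤ m := integral_nonneg_of_ae (hb.mono fun ω h => h.1)
  have hmC : m ≤ C := by
    have := integral_mono_ae hint (integrable_const C) (hb.mono fun ω h => h.2)
    simpa using this
  -- pointwise chord bound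
  have hpt : ∀ᵐ ω ∂μ, Real.exp (s * Y ω)
      ≤ (1 - Y ω / C) + (Y ω / C) * Real.exp (s * C) := by
    filter_upwards [hb] with ω hω
    have hθ0 : 0 ≤ Y ω / C := div_nonneg hω.1 hC.le
    have hθ1 : Y ω / C ≤ 1 := (div_le_one hC).2 hω.2
    have hc := convexOn_exp.2 (Set.mem_univ (0:ℝ)) (Set.mem_univ (s*C))
      (by linarith : (0:ℝ) ≤ 1 - Y ω / C) hθ0 (by ring)
    have harg : (1 - Y ω / C) • (0:ℝ) + (Y ω / C) • (s*C) = s * Y ω := by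
      simp only [smul_eq_mul, mul_zero, zero_add]; rw [div_mul_eq_mul_div, div_eq_iff hC.ne']; ring
    rw [harg] at hc
    simpa [Real.exp_zero] using hc
  have hintR : Integrable (fun ω => (1 - Y ω / C) + (Y ω / C) * Real.exp (s * C)) μ := by
    apply Integrable.add
    · exact (integrable_const 1).sub (hint.div_const C)
    · exact (hint.div_const C).mul_const _
  have h1 : mgf Y μ s ≤ ∫ ω, ((1 - Y ω / C) + (Y ω / C) * Real.exp (s * C)) ∂μ :=
    integral_mono_ae (integrable_exp_mul_of_bdd μ hY hb s) hintR hpt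
  have h2 : ∫ ω, ((1 - Y ω / C) + (Y ω / C) * Real.exp (s * C)) ∂μ
      = (1 - m/C) + (m/C) * Real.exp (s*C) := by
    have heq : (fun ω => (1 - Y ω / C) + (Y ω / C) * Real.exp (s*C))
        = fun ω => 1 + Y ω * ((Real.exp (s*C) - 1)/C) := by
      funext ω; field_simp; ring
    rw [heq, integral_add (integrable_const 1) (hint.mul_const _), integral_const,
      integral_mul_const]
    simp only [measure_univ, probReal_univ, ENNReal.toReal_one, smul_eq_mul, one_mul, ← hm]
    field_simp; ring
  have h3 : (1 - m/C) + (m/C) * Real.exp (s*C)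
      ≤ Real.exp ((m/C) * (s*C) + (s*C)^2/4) :=
    chord_exp_bound (div_nonneg hm0 hC.le) ((div_le_one hC).2 hmC) (s*C)
  have h4 : (m/C) * (s*C) + (s*C)^2/4 = s * m + s^2 * C^2 / 4 := by
    field_simp
  rw [h4] at h3
  linarith







lemma chernoff_upper {ι : Type*} (η : ι → Ω → ℝ) (hmeas : ∀ i, Measurable (η i))
    (hindep : iIndepFun η μ) {C m : ℝ} (hC : 0 < C)
    (hbdd : ∀ i, ∀ᵐ ω ∂μ, η i ω ∈ Set.Icc (0:ℝ) C)
    (hmean : ∀ i, (∫ ω, η i ω ∂μ) = m) (s : Finset ι) {t : ℝ} (ht : 0 ≤ t) :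
    (μ {ω | (s.card : ℝ) * (m + t) ≤ ∑ i ∈ s, η i ω}).toReal
      ≤ Real.exp (-(s.card : ℝ) * t^2 / C^2) := by
  set lam := 2 * t / C^2 with hlam
  have hlam0 : 0 ≤ lam := by positivity
  have hint : ∀ i ∈ s, Integrable (fun ω => Real.exp (lam * η i ω)) μ :=
    fun i _ => integrable_exp_mul_of_bdd μ (hmeas i) (hbdd i) lam
  have hXint : Integrable (fun ω => Real.exp (lam * (∑ i ∈ s, η i) ω)) μ :=
    hindep.integrable_exp_mul_sum hmeas hint
  have hcher := measure_ge_le_exp_mul_mgf (X := ∑ i ∈ s, η i) (μ := μ)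
    ((s.card : ℝ) * (m + t)) hlam0 hXint
  have hmgf : mgf (∑ i ∈ s, η i) μ lam ≤ Real.exp ((s.card : ℝ) * (lam * m + lam^2 * C^2 / 4)) := by
    rw [hindep.mgf_sum hmeas s]
    calc ∏ i ∈ s, mgf (η i) μ lam
        ≤ ∏ i ∈ s, Real.exp (lam * m + lam^2 * C^2 / 4) := by
          refine Finset.prod_le_prod (fun i _ => mgf_nonneg) (fun i _ => ?_)
          have := mgf_le_of_bdd μ (hmeas i) hC (hbdd i) lam
          rwa [hmean i] at this
      _ = Real.exp ((s.card : ℝ) * (lam * m + lam^2 * C^2 / 4)) := by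
          rw [Finset.prod_const, ← Real.exp_nat_mul]
  have hset : {ω | (s.card : ℝ) * (m + t) ≤ (∑ i ∈ s, η i) ω}
      = {ω | (s.card : ℝ) * (m + t) ≤ ∑ i ∈ s, η i ω} := by
    simp [Finset.sum_apply]
  rw [hset] at hcher
  refine hcher.trans ?_
  calc Real.exp (-lam * ((s.card:ℝ) * (m + t))) * mgf (∑ i ∈ s, η i) μ lam
      ≤ Real.exp (-lam * ((s.card:ℝ) * (m + t))) *
          Real.exp ((s.card : ℝ) * (lam * m + lam^2 * C^2 / 4)) := by
        exact mul_le_mul_of_nonneg_left hmgf (Real.exp_pos _).le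
    _ = Real.exp (-(s.card : ℝ) * t^2 / C^2) := by
        rw [← Real.exp_add]
        congr 1
        rw [hlam]
        field_simp
        ring

lemma chernoff_lower {ι : Type*} (η : ι → Ω → ℝ) (hmeas : ∀ i, Measurable (η i))
    (hindep : iIndepFun η μ) {C m : ℝ} (hC : 0 < C)
    (hbdd : ∀ i, ∀ᵐ ω ∂μ, η i ω ∈ Set.Icc (0:ℝ) C)
    (hmean : ∀ i, (∫ ω, η i ω ∂μ) = m) (s : Finset ι) {t : ℝ} (ht : 0 ≤ t) :
    (μ {ω | ∑ i ∈ s, η i ω ≤ (s.card : ℝ) * (m - t)}).toReal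
      ≤ Real.exp (-(s.card : ℝ) * t^2 / C^2) := by
  set lam := -(2 * t / C^2) with hlam
  have hlam0 : lam ≤ 0 := by rw [hlam]; simp; positivity
  have hint : ∀ i ∈ s, Integrable (fun ω => Real.exp (lam * η i ω)) μ :=
    fun i _ => integrable_exp_mul_of_bdd μ (hmeas i) (hbdd i) lam
  have hXint : Integrable (fun ω => Real.exp (lam * (∑ i ∈ s, η i) ω)) μ :=
    hindep.integrable_exp_mul_sum hmeas hint
  have hcher := measure_le_le_exp_mul_mgf (X := ∑ i ∈ s, η i) (μ := μ)
    ((s.card : ℝ) * (m - t)) hlam0 hXint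
  have hmgf : mgf (∑ i ∈ s, η i) μ lam ≤ Real.exp ((s.card : ℝ) * (lam * m + lam^2 * C^2 / 4)) := by
    rw [hindep.mgf_sum hmeas s]
    calc ∏ i ∈ s, mgf (η i) μ lam
        ≤ ∏ i ∈ s, Real.exp (lam * m + lam^2 * C^2 / 4) := by
          refine Finset.prod_le_prod (fun i _ => mgf_nonneg) (fun i _ => ?_)
          have := mgf_le_of_bdd μ (hmeas i) hC (hbdd i) lam
          rwa [hmean i] at this
      _ = Real.exp ((s.card : ℝ) * (lam * m + lam^2 * C^2 / 4)) := by
          rw [Finset.prod_const, ← Real.exp_nat_mul]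
  have hset : {ω | (∑ i ∈ s, η i) ω ≤ (s.card : ℝ) * (m - t)}
      = {ω | ∑ i ∈ s, η i ω ≤ (s.card : ℝ) * (m - t)} := by
    simp [Finset.sum_apply]
  rw [hset] at hcher
  refine hcher.trans ?_
  calc Real.exp (-lam * ((s.card:ℝ) * (m - t))) * mgf (∑ i ∈ s, η i) μ lam
      ≤ Real.exp (-lam * ((s.card:ℝ) * (m - t))) *
          Real.exp ((s.card : ℝ) * (lam * m + lam^2 * C^2 / 4)) := by
        exact mul_le_mul_of_nonneg_left hmgf (Real.exp_pos _).le
    _ = Real.exp (-(s.card : ℝ) * t^2 / C^2) := by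
        rw [← Real.exp_add]
        congr 1
        rw [hlam]
        field_simp
        ring
end AuxHoeffding

/-- Feasibility transfer: if the empirical training cost is at most (1−δ)b with δ
exceeding the stated deviation threshold, then with probability at least 1 − ε the
empirical test cost is at most b. -/
theorem stmt_9 {Ω : Type*} [MeasurableSpace Ω] (μ : Measure Ω) [IsProbabilityMeasure μ]
    {NTr N : ℕ} (hNTr : 0 < NTr) (hN : 0 < N)
    (η : (Fin NTr ⊕ Fin N) → Ω → ℝ) (C b δ ε : ℝ)
    (hmeas : ∀ i, Measurable (η i))
    (hindep : iIndepFun η μ)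
    (hident : ∀ i j, IdentDistrib (η i) (η j) μ μ)
    (hbdd : ∀ i, ∀ᵐ ω ∂μ, η i ω ∈ Set.Icc (0:ℝ) C)
    (hb : 0 < b) (hε : ε ∈ Set.Ioo (0:ℝ) 1)
    (hδ : (C / b) * (Real.sqrt ((Real.log 4 - Real.log ε) / N) +
        Real.sqrt ((Real.log 4 - Real.log ε) / NTr)) ≤ δ) :
    1 - ε ≤ (μ {ω |
      (1 / NTr : ℝ) * ∑ n : Fin NTr, η (Sum.inl n) ω ≤ (1 - δ) * b →
      (1 / N : ℝ) * ∑ n : Fin N, η (Sum.inr n) ω ≤ b}).toReal := by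
  set S := {ω |
      (1 / NTr : ℝ) * ∑ n : Fin NTr, η (Sum.inl n) ω ≤ (1 - δ) * b →
      (1 / N : ℝ) * ∑ n : Fin N, η (Sum.inr n) ω ≤ b} with hS
  have hμ0 : μ ≠ 0 := IsProbabilityMeasure.ne_zero μ
  have : (MeasureTheory.ae μ).NeBot := ae_neBot.2 hμ0
  obtain ⟨ω0, hω0⟩ := (hbdd (Sum.inl ⟨0, hNTr⟩)).exists
  have hC0 : 0 ≤ C := hω0.1.trans hω0.2
  have hNpos : (0:ℝ) < N := by exact_mod_cast hN
  have hNTrpos : (0:ℝ) < NTr := by exact_mod_cast hNTr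
  rcases hC0.eq_or_lt with hCz | hC
  · -- degenerate case C = 0
    have hzero : ∀ᵐ ω ∂μ, ∀ n : Fin N, η (Sum.inr n) ω = 0 :=
      ae_all_iff.2 fun n => (hbdd (Sum.inr n)).mono
        (fun ω h => le_antisymm (hCz ▸ h.2) h.1)
    have hsub : ∀ᵐ ω ∂μ, ω ∈ S := by
      filter_upwards [hzero] with ω hω
      intro _
      have : ∑ n : Fin N, η (Sum.inr n) ω = 0 := Finset.sum_eq_zero fun n _ => hω n
      rw [this, mul_zero]; exact hb.le
    have h1 : (1 : ENNReal) ≤ μ S := by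
      rw [← measure_univ (μ := μ)]
      exact measure_mono_ae (hsub.mono fun ω h _ => h)
    have : μ S = 1 := le_antisymm prob_le_one h1
    rw [this]
    simp only [ENNReal.toReal_one]
    linarith [hε.1]
  -- main case C > 0
  set L := Real.log 4 - Real.log ε with hLdef
  have hL : 0 < L := by
    have : Real.log ε < Real.log 4 := Real.log_lt_log hε.1 (by linarith [hε.2])
    linarith
  set m := ∫ ω, η (Sum.inl ⟨0, hNTr⟩) ω ∂μ with hm
  have hmean : ∀ i, (∫ ω, η i ω ∂μ) = m := fun i => (hident i _).integral_eq
  set tN := C * Real.sqrt (L / N) with htN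
  set tTr := C * Real.sqrt (L / NTr) with htTr
  have htN0 : 0 ≤ tN := mul_nonneg hC.le (Real.sqrt_nonneg _)
  have htTr0 : 0 ≤ tTr := mul_nonneg hC.le (Real.sqrt_nonneg _)
  set A := {ω | (N:ℝ) * (m + tN) ≤ ∑ n : Fin N, η (Sum.inr n) ω} with hA
  set B := {ω | ∑ n : Fin NTr, η (Sum.inl n) ω ≤ (NTr:ℝ) * (m - tTr)} with hB
  -- Chernoff bounds
  set sN : Finset (Fin NTr ⊕ Fin N) := Finset.univ.map ⟨Sum.inr, Sum.inr_injective⟩ with hsN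
  set sTr : Finset (Fin NTr ⊕ Fin N) := Finset.univ.map ⟨Sum.inl, Sum.inl_injective⟩ with hsTr
  have hcardN : (sN.card : ℝ) = N := by simp [hsN]
  have hcardTr : (sTr.card : ℝ) = NTr := by simp [hsTr]
  have hAbound : (μ A).toReal ≤ ε / 4 := by
    have h := chernoff_upper μ η hmeas hindep hC hbdd hmean sN htN0
    have hsetA : {ω | (sN.card : ℝ) * (m + tN) ≤ ∑ i ∈ sN, η i ω} = A := by
      ext ω
      simp [hsN, hA, Finset.sum_map, hcardN]
    have hexp : Real.exp (-(sN.card : ℝ) * tN^2 / C^2) = ε / 4 := by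
      have h1 : tN^2 = C^2 * (L / N) := by
        rw [htN, mul_pow, Real.sq_sqrt (by positivity)]
      rw [hcardN, h1]
      have h2 : -(N:ℝ) * (C^2 * (L / N)) / C^2 = -L := by
        field_simp
      rw [h2, hLdef, show -(Real.log 4 - Real.log ε) = Real.log ε - Real.log 4 by ring,
        Real.exp_sub, Real.exp_log hε.1, Real.exp_log (by norm_num : (0:ℝ) < 4)]
    rw [hsetA, hexp] at h
    exact h
  have hBbound : (μ B).toReal ≤ ε / 4 := by
    have h := chernoff_lower μ η hmeas hindep hC hbdd hmean sTr htTr0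
    have hsetB : {ω | ∑ i ∈ sTr, η i ω ≤ (sTr.card : ℝ) * (m - tTr)} = B := by
      ext ω
      simp [hsTr, hB, Finset.sum_map, hcardTr]
    have hexp : Real.exp (-(sTr.card : ℝ) * tTr^2 / C^2) = ε / 4 := by
      have h1 : tTr^2 = C^2 * (L / NTr) := by
        rw [htTr, mul_pow, Real.sq_sqrt (by positivity)]
      rw [hcardTr, h1]
      have h2 : -(NTr:ℝ) * (C^2 * (L / NTr)) / C^2 = -L := by
        field_simp
      rw [h2, hLdef, show -(Real.log 4 - Real.log ε) = Real.log ε - Real.log 4 by ring,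
        Real.exp_sub, Real.exp_log hε.1, Real.exp_log (by norm_num : (0:ℝ) < 4)]
    rw [hsetB, hexp] at h
    exact h
  -- measurability
  have hmA : MeasurableSet A :=
    measurableSet_le measurable_const (Finset.measurable_sum _ fun n _ => hmeas (Sum.inr n))
  have hmB : MeasurableSet B :=
    measurableSet_le (Finset.measurable_sum _ fun n _ => hmeas (Sum.inl n)) measurable_const
  -- the good event is contained in S
  have hincl : (A ∪ B)ᶜ ⊆ S := by
    intro ω hω
    simp only [Set.mem_compl_iff, Set.mem_union, hA, hB, Set.mem_setOf_eq, not_or, not_le] at hω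
    obtain ⟨hnA, hnB⟩ := hω
    intro htrain
    -- from training bound
    have hTr1 : ∑ n : Fin NTr, η (Sum.inl n) ω ≤ (NTr:ℝ) * ((1 - δ) * b) := by
      have := mul_le_mul_of_nonneg_left htrain hNTrpos.le
      calc ∑ n : Fin NTr, η (Sum.inl n) ω
          = (NTr:ℝ) * ((1 / NTr : ℝ) * ∑ n : Fin NTr, η (Sum.inl n) ω) := by
            field_simp
        _ ≤ (NTr:ℝ) * ((1 - δ) * b) := this
    have hm1 : m - tTr < (1 - δ) * b := by
      have := lt_of_lt_of_le hnB hTr1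
      exact (mul_lt_mul_iff_right₀ hNTrpos).1 this
    have hT1 : (1 / N : ℝ) * ∑ n : Fin N, η (Sum.inr n) ω < m + tN := by
      rw [div_mul_eq_mul_div, one_mul, div_lt_iff₀ hNpos]
      calc ∑ n : Fin N, η (Sum.inr n) ω < (N:ℝ) * (m + tN) := hnA
        _ = (m + tN) * N := by ring
    have htdelta : tN + tTr ≤ δ * b := by
      have h := mul_le_mul_of_nonneg_right hδ hb.le
      have heq : (C / b) * (Real.sqrt (L / N) + Real.sqrt (L / NTr)) * b
          = tN + tTr := by
        rw [htN, htTr]; field_simp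
      rw [heq] at h
      exact h
    linarith
  -- probability computation
  have hABle : (μ (A ∪ B)).toReal ≤ ε / 2 := by
    calc (μ (A ∪ B)).toReal ≤ (μ A + μ B).toReal :=
          ENNReal.toReal_mono (by finiteness) (measure_union_le A B)
      _ = (μ A).toReal + (μ B).toReal :=
          ENNReal.toReal_add (measure_ne_top μ A) (measure_ne_top μ B)
      _ ≤ ε / 2 := by linarith
  have hcompl : (μ (A ∪ B)ᶜ).toReal = 1 - (μ (A ∪ B)).toReal := by
    rw [prob_compl_eq_one_sub (hmA.union hmB),
      ENNReal.toReal_sub_of_le prob_le_one (by norm_num), ENNReal.toReal_one]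
  have hfinal : (μ (A ∪ B)ᶜ).toReal ≤ (μ S).toReal :=
    ENNReal.toReal_mono (measure_ne_top μ S) (measure_mono hincl)
  rw [hcompl] at hfinal
  linarith [hε.1]
end

section
/- Partition a price interval [0, P] into M subintervals with endpoints p_j = jP/(M−1), j = 0,…,M−1, and suppose the per-sample reward function p ↦ r^{s^p}(x) is piecewise constant in p, changing value on sample x only when x falls in a 'boundary set' A_j associated with the subinterval containing p, where Pr[x ∈ A_j] ≤ u‖c‖₁/(M·min_{c_k≠0} c_k²) for a density bound u. Then for i.i.d. samples x₁,…,x_N and any p ∈ [p_m, p_{m+1}], with probability at least 1 − ε, |(1/N)∑_n r^{s^p}(x_n) − (1/N)∑_n r^{s^{p_m}}(x_n)| ≤ u‖c‖₁/(M·min_{c_k≠0} c_k²) + √((log M + log 2 − log ε)/(2N)). -/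
open MeasureTheory ProbabilityTheory

/-- Hoeffding's lemma for a Bernoulli(p) variable: its centered mgf is at most `exp (s^2/8)`. -/
lemma bern_mgf_le {p : ℝ} (hp0 : 0 ≤ p) (hp1 : p ≤ 1) (s : ℝ) :
    (1 - p + p * Real.exp s) * Real.exp (-(s * p)) ≤ Real.exp (s ^ 2 / 8) := by
  have hD : ∀ t : ℝ, 0 < 1 - p + p * Real.exp t := by
    intro t
    have h := Real.exp_pos t
    rcases eq_or_lt_of_le hp0 with h0 | h0
    · nlinarith
    · nlinarith
  set D : ℝ → ℝ := fun t => 1 - p + p * Real.exp t with hDdef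
  set F : ℝ → ℝ := fun t => t * p + t ^ 2 / 8 - Real.log (D t) with hFdef
  set F' : ℝ → ℝ := fun t => p + t / 4 - p * Real.exp t / D t with hF'def
  have hDer : ∀ t, HasDerivAt D (p * Real.exp t) t := fun t =>
    ((Real.hasDerivAt_exp t).const_mul p).const_add (1 - p)
  have hFder : ∀ t, HasDerivAt F (F' t) t := by
    intro t
    have h1 : HasDerivAt (fun t : ℝ => t * p) p t := by
      simpa using (hasDerivAt_id t).mul_const p
    have h2 : HasDerivAt (fun t : ℝ => t ^ 2 / 8) (t / 4) t := by
      have := (hasDerivAt_pow 2 t).div_const 8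
      simpa using this.congr_deriv (by ring)
    have h3 : HasDerivAt (fun t => Real.log (D t)) (p * Real.exp t / D t) t :=
      (hDer t).log (hD t).ne'
    exact (h1.add h2).sub h3
  have hF'der : ∀ t, HasDerivAt F' ((p * Real.exp t / D t - 1 / 2) ^ 2) t := by
    intro t
    have hu : HasDerivAt (fun t : ℝ => p * Real.exp t) (p * Real.exp t) t :=
      (Real.hasDerivAt_exp t).const_mul p
    have hq : HasDerivAt (fun t => p * Real.exp t / D t)
        ((p * Real.exp t * D t - p * Real.exp t * (p * Real.exp t)) / D t ^ 2) t :=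
      hu.div (hDer t) (hD t).ne'
    have h2 : HasDerivAt (fun t : ℝ => p + t / 4) (1 / 4) t := by
      simpa using ((hasDerivAt_id t).div_const 4).const_add p
    have := h2.sub hq
    refine this.congr_deriv ?_
    have hDne : D t ≠ 0 := (hD t).ne'
    generalize D t = d at hDne ⊢
    field_simp
    ring
  have hmono : Monotone F' :=
    monotone_of_deriv_nonneg (fun t => (hF'der t).differentiableAt)
      (fun t => by rw [(hF'der t).deriv]; positivity)
  have hF'0 : F' 0 = 0 := by
    have h1 : D 0 = 1 := by simp [hDdef]
    simp [hF'def, h1, Real.exp_zero]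
  have hF'nonneg : ∀ t : ℝ, 0 ≤ t → 0 ≤ F' t := fun t ht => hF'0 ▸ hmono ht
  have hFmono : MonotoneOn F (Set.Ici (0 : ℝ)) := by
    refine monotoneOn_of_deriv_nonneg (convex_Ici 0)
      (fun t _ => ((hFder t).differentiableAt.continuousAt).continuousWithinAt)
      (fun t _ => (hFder t).differentiableAt.differentiableWithinAt) ?_
    intro t ht
    rw [(hFder t).deriv]
    exact hF'nonneg t (le_of_lt (by simpa using ht))
  have hF0 : F 0 = 0 := by
    have h1 : D 0 = 1 := by simp [hDdef]
    simp [hFdef, h1]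
  have key : ∀ t : ℝ, 0 ≤ F t → (1 - p + p * Real.exp t) * Real.exp (-(t * p)) ≤
      Real.exp (t ^ 2 / 8) := by
    intro t hFt
    have hlog : Real.log (D t) ≤ t * p + t ^ 2 / 8 := by
      simp only [hFdef] at hFt; linarith
    have hDle : D t ≤ Real.exp (t * p + t ^ 2 / 8) :=
      (Real.log_le_iff_le_exp (hD t)).mp hlog
    calc (1 - p + p * Real.exp t) * Real.exp (-(t * p))
        ≤ Real.exp (t * p + t ^ 2 / 8) * Real.exp (-(t * p)) :=
          mul_le_mul_of_nonneg_right hDle (Real.exp_nonneg _)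
      _ = Real.exp (t ^ 2 / 8) := by rw [← Real.exp_add]; ring_nf
  rcases le_or_gt 0 s with hs | hs
  · refine key s ?_
    have := hFmono (Set.self_mem_Ici) (Set.mem_Ici.mpr hs) hs
    rwa [hF0] at this
  · have hF'nonpos : ∀ t : ℝ, t ≤ 0 → F' t ≤ 0 := fun t ht => hF'0 ▸ hmono ht
    have hFanti : AntitoneOn F (Set.Iic (0 : ℝ)) := by
      refine antitoneOn_of_deriv_nonpos (convex_Iic 0)
        (fun t _ => ((hFder t).differentiableAt.continuousAt).continuousWithinAt)
        (fun t _ => (hFder t).differentiableAt.differentiableWithinAt) ?_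
      intro t ht
      rw [(hFder t).deriv]
      exact hF'nonpos t (le_of_lt (by simpa using ht))
    refine key s ?_
    have := hFanti (Set.mem_Iic.mpr hs.le) Set.self_mem_Iic hs.le
    rwa [hF0] at this

/-- Chernoff bound for a sum of independent bounded variables with per-variable mgf bound. -/
lemma chernoff_sum {Ω : Type*} [MeasurableSpace Ω] {μ : Measure Ω} [IsProbabilityMeasure μ]
    {N : ℕ} {Z : Fin N → Ω → ℝ} (hzmeas : ∀ n, Measurable (Z n))
    (hind : iIndepFun Z μ)
    (hbdd : ∀ n ω, |Z n ω| ≤ 1)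
    {s a : ℝ} (hs : 0 ≤ s)
    (hmgf : ∀ n, mgf (Z n) μ s ≤ Real.exp (s ^ 2 / 8)) :
    (μ {ω | a ≤ ∑ n, Z n ω}).toReal ≤ Real.exp (-s * a) * Real.exp (s ^ 2 / 8) ^ N := by
  set Xs : Ω → ℝ := ∑ n, Z n with hXs
  have hXseq : ∀ ω, Xs ω = ∑ n, Z n ω := by
    intro ω; simp [hXs, Finset.sum_apply]
  have hXsmeas : Measurable Xs := by
    have h : Xs = fun ω => ∑ n, Z n ω := funext hXseq
    rw [h]
    exact Finset.measurable_sum _ fun n _ => hzmeas n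
  have hXsbd : ∀ ω, Xs ω ≤ N := by
    intro ω
    rw [hXseq]
    calc (∑ n, Z n ω) ≤ ∑ n : Fin N, (1 : ℝ) :=
          Finset.sum_le_sum fun n _ => (abs_le.mp (hbdd n ω)).2
      _ = N := by simp
  have hint : Integrable (fun ω => Real.exp (s * Xs ω)) μ := by
    refine Integrable.mono' (integrable_const (Real.exp (s * N)))
      ((hXsmeas.const_mul s).exp.aestronglyMeasurable) ?_
    filter_upwards with ω
    rw [Real.norm_eq_abs, abs_of_pos (Real.exp_pos _)]
    exact Real.exp_le_exp.mpr (mul_le_mul_of_nonneg_left (hXsbd ω) hs)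
  have hset : {ω | a ≤ ∑ n, Z n ω} = {ω | a ≤ Xs ω} := by
    ext ω; simp [hXseq]
  rw [hset]
  calc (μ {ω | a ≤ Xs ω}).toReal ≤ Real.exp (-s * a) * mgf Xs μ s :=
        measure_ge_le_exp_mul_mgf a hs hint
    _ ≤ Real.exp (-s * a) * Real.exp (s ^ 2 / 8) ^ N := by
        refine mul_le_mul_of_nonneg_left ?_ (Real.exp_nonneg _)
        rw [hXs, hind.mgf_sum hzmeas]
        calc (∏ n : Fin N, mgf (Z n) μ s) ≤ ∏ _n : Fin N, Real.exp (s ^ 2 / 8) :=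
              Finset.prod_le_prod (fun n _ => mgf_nonneg) (fun n _ => hmgf n)
          _ = Real.exp (s ^ 2 / 8) ^ N := by simp

/-- Price-grid discretization bound: for a price p in the subinterval [p_m, p_{m+1}]
of the grid p_j = jP/(M−1), if the per-sample reward differs from its value at p_m
only on a boundary set A_m of probability at most u‖c‖₁/(M·min_{cₖ≠0} cₖ²), then with
probability at least 1 − ε the empirical rewards at p and p_m differ by at most that
probability bound plus √((log M + log 2 − log ε)/(2N)). -/
theorem stmt_18 {X : Type*} [MeasurableSpace X] {Ω : Type*} [MeasurableSpace Ω]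
    (μ : Measure Ω) [IsProbabilityMeasure μ] {N M K : ℕ} (hN : 0 < N) (hM : 2 ≤ M)
    (x : Fin N → Ω → X) (ν : Measure X) [IsProbabilityMeasure ν]
    (hmeas : ∀ n, Measurable (x n))
    (hindep : iIndepFun x μ)
    (hmap : ∀ n, Measure.map (x n) μ = ν)
    (r : ℝ → X → ℝ) (hr : ∀ p y, r p y ∈ Set.Icc (0:ℝ) 1)
    (P : ℝ) (hP : 0 < P)
    (c : Fin K → ℝ) (u : ℝ) (hu : 0 ≤ u)
    (hcne : (((Finset.univ : Finset (Fin K)).filter fun k => c k ≠ 0)).Nonempty)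
    (A : Fin M → Set X) (hAmeas : ∀ j, MeasurableSet (A j))
    (hprob : ∀ j, (ν (A j)).toReal ≤
      u * (∑ k, |c k|) / (M * ((((Finset.univ : Finset (Fin K)).filter
        fun k => c k ≠ 0).image c).min' (hcne.image c))^2))
    (m : ℕ) (hm : m + 1 < M) (p : ℝ)
    (hp : p ∈ Set.Icc ((m : ℝ) * P / ((M : ℝ) - 1)) (((m : ℝ) + 1) * P / ((M : ℝ) - 1)))
    (hoff : ∀ y, y ∉ A ⟨m, Nat.lt_of_succ_lt hm⟩ →
      r p y = r ((m : ℝ) * P / ((M : ℝ) - 1)) y)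
    (ε : ℝ) (hε : ε ∈ Set.Ioo (0:ℝ) 1) :
    1 - ε ≤ (μ {ω |
      |(1 / N : ℝ) * ∑ n, r p (x n ω) -
        (1 / N : ℝ) * ∑ n, r ((m : ℝ) * P / ((M : ℝ) - 1)) (x n ω)| ≤
      u * (∑ k, |c k|) / (M * ((((Finset.univ : Finset (Fin K)).filter
        fun k => c k ≠ 0).image c).min' (hcne.image c))^2) +
      Real.sqrt ((Real.log M + Real.log 2 - Real.log ε) / (2 * N))}).toReal := by
  classical
  set q : ℝ := u * (∑ k, |c k|) / (M * ((((Finset.univ : Finset (Fin K)).filter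
      fun k => c k ≠ 0).image c).min' (hcne.image c))^2) with hq
  set L : ℝ := Real.log M + Real.log 2 - Real.log ε with hL
  set t : ℝ := Real.sqrt (L / (2 * N)) with ht
  set pm : ℝ := (m : ℝ) * P / ((M : ℝ) - 1) with hpm
  set m' : Fin M := ⟨m, Nat.lt_of_succ_lt hm⟩ with hm'
  set S : Set X := A m' with hS
  set pa : ℝ := (ν S).toReal with hpa
  -- Basic facts
  have hN' : (0 : ℝ) < N := by exact_mod_cast hN
  have hpa0 : 0 ≤ pa := ENNReal.toReal_nonneg
  have hpa1 : pa ≤ 1 := by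
    rw [hpa]
    have h := ENNReal.toReal_mono ENNReal.one_ne_top (prob_le_one (μ := ν) (s := S))
    simpa using h
  have hpaq : pa ≤ q := hprob m'
  have ht0 : 0 ≤ t := Real.sqrt_nonneg _
  have hL0 : 0 ≤ L := by
    have h1 : (0:ℝ) ≤ Real.log M := Real.log_nonneg (by exact_mod_cast Nat.one_le_of_lt hM)
    have h2 : (0:ℝ) ≤ Real.log 2 := Real.log_nonneg (by norm_num)
    have h3 : Real.log ε ≤ 0 := Real.log_nonpos hε.1.le hε.2.le
    simp only [hL]; linarith
  have ht2 : t ^ 2 = L / (2 * N) := Real.sq_sqrt (by positivity)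
  -- indicator variables
  set Y : Fin N → Ω → ℝ := fun n ω => S.indicator (fun _ => (1:ℝ)) (x n ω) with hY
  set Z : Fin N → Ω → ℝ := fun n ω => Y n ω - pa with hZ
  have hind01 : ∀ y, S.indicator (fun _ => (1:ℝ)) y = 0 ∨
      S.indicator (fun _ => (1:ℝ)) y = 1 := by
    intro y
    by_cases hy : y ∈ S
    · right; simp [Set.indicator_of_mem hy]
    · left; simp [Set.indicator_of_notMem hy]
  have hzmeas : ∀ n, Measurable (Z n) := by
    intro n
    exact ((measurable_const.indicator (hAmeas m')).comp (hmeas n)).sub measurable_const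
  have hzbdd : ∀ n ω, |Z n ω| ≤ 1 := by
    intro n ω
    rw [abs_le]
    rcases hind01 (x n ω) with h | h <;>
      constructor <;> simp only [hZ, hY, h] <;> linarith
  have hind : iIndepFun Z μ := by
    have := hindep.comp (fun _ => fun y => S.indicator (fun _ => (1:ℝ)) y - pa)
      (fun _ => (measurable_const.indicator (hAmeas m')).sub measurable_const)
    exact this
  -- mgf computation
  set s0 : ℝ := 4 * t with hs0
  have hs0nn : 0 ≤ s0 := by positivity
  have hmgfZ : ∀ n, mgf (Z n) μ s0 ≤ Real.exp (s0 ^ 2 / 8) := by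
    intro n
    have hmg : mgf (Z n) μ s0 =
        ∫ y, Real.exp (s0 * (S.indicator (fun _ => (1:ℝ)) y - pa)) ∂ν := by
      have h0 : ∫ y, Real.exp (s0 * (S.indicator (fun _ => (1:ℝ)) y - pa))
          ∂(Measure.map (x n) μ) = ∫ ω, Real.exp (s0 * Z n ω) ∂μ :=
        integral_map (hmeas n).aemeasurable
          ((((measurable_const.indicator (hAmeas m')).sub
            measurable_const).const_mul s0).exp).aestronglyMeasurable
      rw [hmap n] at h0
      exact h0.symm
    have hfun : (fun y => Real.exp (s0 * (S.indicator (fun _ => (1:ℝ)) y - pa))) =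
        fun y => (S.indicator (fun _ => Real.exp s0 - 1) y + 1) * Real.exp (-(s0 * pa)) := by
      funext y
      by_cases hy : y ∈ S
      · simp only [Set.indicator_of_mem hy]
        rw [mul_sub, Real.exp_sub, mul_one, Real.exp_neg]
        field_simp
        ring
      · simp only [Set.indicator_of_notMem hy]
        rw [mul_sub, Real.exp_sub, mul_zero, Real.exp_zero, Real.exp_neg]
        field_simp
        ring
    have hintind : Integrable (fun y => S.indicator (fun _ => Real.exp s0 - 1) y) ν :=
      (integrable_const (Real.exp s0 - 1)).indicator (hAmeas m')
    have hval : mgf (Z n) μ s0 = (1 - pa + pa * Real.exp s0) * Real.exp (-(s0 * pa)) := by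
      rw [hmg, hfun]
      rw [integral_mul_const]
      congr 1
      rw [integral_add hintind (integrable_const 1)]
      rw [integral_indicator_const _ (hAmeas m'), integral_const]
      simp only [smul_eq_mul, measure_univ, ENNReal.toReal_one, one_mul]
      rw [show ν.real (A m') = pa from rfl, show ν.real Set.univ = 1 by simp]
      ring
    rw [hval]
    exact bern_mgf_le hpa0 hpa1 s0
  -- Chernoff bound
  set Bad : Set Ω := {ω | (N : ℝ) * t ≤ ∑ n, Z n ω} with hBad
  have hchern : (μ Bad).toReal ≤ ε := by
    have h1 := chernoff_sum hzmeas hind hzbdd hs0nn hmgfZ (a := (N : ℝ) * t)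
    refine h1.trans ?_
    have heq : Real.exp (-s0 * ((N : ℝ) * t)) * Real.exp (s0 ^ 2 / 8) ^ N =
        Real.exp (-L) := by
      rw [← Real.exp_nat_mul, ← Real.exp_add]
      congr 1
      have h2 : -s0 * ((N : ℝ) * t) + (N : ℝ) * (s0 ^ 2 / 8) = -(2 * N * t ^ 2) := by
        rw [hs0]; ring
      rw [h2, ht2]
      field_simp
    rw [heq]
    have h3 : Real.exp (-L) ≤ Real.exp (Real.log ε) := by
      refine Real.exp_le_exp.mpr ?_
      have ha : (0:ℝ) ≤ Real.log M := Real.log_nonneg (by exact_mod_cast Nat.one_le_of_lt hM)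
      have hb : (0:ℝ) ≤ Real.log 2 := Real.log_nonneg (by norm_num)
      simp only [hL]; linarith
    rwa [Real.exp_log hε.1] at h3
  -- deterministic bound and final assembly
  set G : Set Ω := {ω | |(1 / N : ℝ) * ∑ n, r p (x n ω) -
      (1 / N : ℝ) * ∑ n, r pm (x n ω)| ≤ q + t} with hG
  have hper : ∀ y, |r p y - r pm y| ≤ S.indicator (fun _ => (1:ℝ)) y := by
    intro y
    by_cases hy : y ∈ S
    · rw [Set.indicator_of_mem hy, abs_le]
      exact ⟨by linarith [(hr p y).1, (hr pm y).2], by linarith [(hr p y).2, (hr pm y).1]⟩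
    · rw [Set.indicator_of_notMem hy, hoff y hy]
      simp
  have hsub : Gᶜ ⊆ Bad := by
    intro ω hω
    simp only [hG, Set.mem_compl_iff, Set.mem_setOf_eq, not_le] at hω
    have hkey : |(1 / N : ℝ) * ∑ n, r p (x n ω) - (1 / N : ℝ) * ∑ n, r pm (x n ω)| ≤
        (1 / N : ℝ) * ∑ n, Y n ω := by
      rw [← mul_sub, ← Finset.sum_sub_distrib, abs_mul, abs_of_pos (by positivity : (0:ℝ) < 1 / N)]
      refine mul_le_mul_of_nonneg_left ?_ (by positivity)
      exact (Finset.abs_sum_le_sum_abs _ _).trans (Finset.sum_le_sum fun n _ => hper (x n ω))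
    have hlt : q + t < (1 / N : ℝ) * ∑ n, Y n ω := hω.trans_le hkey
    have hSY : (N : ℝ) * (q + t) < ∑ n, Y n ω := by
      have := mul_lt_mul_of_pos_left hlt hN'
      calc (N : ℝ) * (q + t) < (N : ℝ) * ((1 / N : ℝ) * ∑ n, Y n ω) := this
        _ = ∑ n, Y n ω := by field_simp
    have hZsum : ∑ n, Z n ω = (∑ n, Y n ω) - (N : ℝ) * pa := by
      simp only [hZ]
      rw [Finset.sum_sub_distrib, Finset.sum_const, Finset.card_univ, Fintype.card_fin,
        nsmul_eq_mul]
    show (N : ℝ) * t ≤ ∑ n, Z n ω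
    rw [hZsum]
    have hqm : (N : ℝ) * pa ≤ (N : ℝ) * q := mul_le_mul_of_nonneg_left hpaq hN'.le
    nlinarith
  have hcompl : (μ Gᶜ).toReal ≤ ε :=
    le_trans (ENNReal.toReal_mono (measure_ne_top _ _) (measure_mono hsub)) hchern
  have huniv : (1 : ℝ) ≤ (μ G).toReal + (μ Gᶜ).toReal := by
    have h := measure_union_le (μ := μ) G Gᶜ
    rw [Set.union_compl_self, measure_univ] at h
    have h2 := ENNReal.toReal_mono
      (ENNReal.add_ne_top.mpr ⟨measure_ne_top _ _, measure_ne_top _ _⟩) h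
    rwa [ENNReal.toReal_one, ENNReal.toReal_add (measure_ne_top _ _) (measure_ne_top _ _)] at h2
  show 1 - ε ≤ (μ G).toReal
  linarith
end
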